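/- arXiv:2201.01515 — 11 statements merged into one kernel-verified Lean document; each statement's English description precedes it below -/
import Mathlib

section
/- Let s be a positive integer and s' a negative integer with gcd(s, -s') = 1. Define an orbit from 0 by the rule: from a state x ≤ -1 move to x + s, and from a state x ≥ 0 move to x + s'. Then the orbit starting at 0 is periodic and visits exactly the set {s', s'+1, ..., s-1}, each state exactly once per period of length s + |s'|. -/
/-- The deterministic oscillating walk on ℤ with jump `s > 0` on states `≤ -1`
and jump `s' < 0` on states `≥ 0`, with `gcd(s, -s') = 1`: the orbit of `0`
is periodic with period `s + |s'| = s - s'`, and over one period it visits the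
set `{s', …, s-1}` bijectively (each state exactly once per period). -/
theorem stmt_0 (s s' : ℤ) (hs : 0 < s) (hs' : s' < 0)
    (hgcd : Int.gcd s (-s') = 1)
    (step : ℤ → ℤ) (hstep : ∀ x : ℤ, step x = if x ≤ -1 then x + s else x + s') :
    (∀ i : ℕ, step^[i + (s - s').toNat] 0 = step^[i] 0) ∧
    Set.BijOn (fun i : ℕ => step^[i] (0 : ℤ))
      (Set.Ico 0 (s - s').toNat) (Set.Ico s' s) := by
  set n : ℤ := s - s' with hn
  have hnpos : 0 < n := by omega
  have hN : ((n.toNat : ℤ)) = n := Int.toNat_of_nonneg hnpos.le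
  -- coprimality of s and n
  have hco : IsCoprime s n := by
    have h1 : IsCoprime s (-s') := Int.isCoprime_iff_gcd_eq_one.mpr hgcd
    have := h1.add_mul_left_right 1
    simpa [hn, sub_eq_add_neg, add_comm] using this
  -- main invariant
  have key : ∀ i : ℕ, step^[i] 0 ∈ Set.Ico s' s ∧ n ∣ step^[i] 0 - (i : ℤ) * s := by
    intro i
    induction i with
    | zero =>
      refine ⟨⟨hs'.le, hs⟩, by simp⟩
    | succ i ih =>
      obtain ⟨⟨h1, h2⟩, hd⟩ := ih
      rw [Function.iterate_succ_apply', hstep]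
      by_cases hc : step^[i] 0 ≤ -1
      · rw [if_pos hc]
        refine ⟨⟨by omega, by omega⟩, ?_⟩
        have : step^[i] 0 + s - ((i : ℤ) + 1) * s = step^[i] 0 - (i : ℤ) * s := by ring
        rw [Nat.cast_succ, this]; exact hd
      · rw [if_neg hc]
        refine ⟨⟨by omega, by omega⟩, ?_⟩
        have : step^[i] 0 + s' - ((i : ℤ) + 1) * s
            = (step^[i] 0 - (i : ℤ) * s) + (-1) * n := by simp [hn]; ring
        rw [Nat.cast_succ, this]
        exact dvd_add hd (Dvd.intro_left _ rfl)
  -- two elements of Ico s' s congruent mod n are equal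
  have uniq : ∀ a b : ℤ, a ∈ Set.Ico s' s → b ∈ Set.Ico s' s → n ∣ a - b → a = b := by
    intro a b ⟨ha1, ha2⟩ ⟨hb1, hb2⟩ hdvd
    have : a - b = 0 := Int.eq_zero_of_abs_lt_dvd hdvd (by rw [abs_lt]; omega)
    omega
  -- periodicity in the form x_{N} = 0
  have hper0 : step^[n.toNat] 0 = 0 := by
    obtain ⟨hmem, hdvd⟩ := key n.toNat
    refine uniq _ _ hmem ⟨hs'.le, hs⟩ ?_
    have : n ∣ (n.toNat : ℤ) * s := by rw [hN]; exact Dvd.intro _ rfl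
    simpa using dvd_add hdvd this
  constructor
  · intro i
    rw [Function.iterate_add_apply, hper0]
  · refine ⟨fun i _ => (key i).1, ?_, ?_⟩
    · intro i hi j hj hij
      simp only [Set.mem_Ico] at hi hj
      have hdi := (key i).2
      have hdj := (key j).2
      have h1 : n ∣ ((i : ℤ) - j) * s := by
        have hij' : step^[i] 0 = step^[j] 0 := hij
        have heq : ((i : ℤ) - j) * s
            = (step^[j] 0 - (j : ℤ) * s) - (step^[i] 0 - (i : ℤ) * s) := by
          rw [hij']; ring
        rw [heq]; exact hdj.sub hdi
      have h2 : n ∣ ((i : ℤ) - j) := (hco.symm).dvd_of_dvd_mul_right h1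
      have : (i : ℤ) - j = 0 := Int.eq_zero_of_abs_lt_dvd h2 (by
        rw [abs_lt]
        constructor <;> [skip; skip] <;> omega)
      omega
    · intro y hy
      obtain ⟨u, v, huv⟩ := hco
      -- y ≡ (y*v)*s  mod n  since u*s + v*n = 1? isCoprime: u*s + v*n = 1
      set i : ℕ := ((y * u) % n).toNat with hi
      have hiz : (i : ℤ) = (y * u) % n := Int.toNat_of_nonneg (Int.emod_nonneg _ hnpos.ne')
      have hilt : i < n.toNat := by
        have := Int.emod_lt_of_pos (y * u) hnpos
        omega
      refine ⟨i, ⟨Nat.zero_le _, hilt⟩, ?_⟩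
      obtain ⟨hmem, hdvd⟩ := key i
      refine uniq _ _ hmem hy ?_
      -- n ∣ (i*s - y) : i ≡ y*u mod n, so i*s ≡ y*u*s = y*(1 - v*n) ≡ y
      have h3 : n ∣ (i : ℤ) - y * u := by
        rw [hiz, Int.emod_def]
        exact ⟨-(y * u / n), by ring⟩
      have h4 : n ∣ (i : ℤ) * s - y := by
        have heq : (i : ℤ) * s - y = ((i : ℤ) - y * u) * s + (-(y * v)) * n := by
          linear_combination y * huv
        rw [heq]
        exact dvd_add (Dvd.dvd.mul_right h3 s) (Dvd.intro_left _ rfl)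
      have : step^[i] 0 - y = (step^[i] 0 - (i : ℤ) * s) + ((i : ℤ) * s - y) := by ring
      rw [this]
      exact dvd_add hdvd h4
end

section
/- Let s > 0, s' < 0 with gcd(s, -s') = δ. For the deterministic oscillating walk (jump s on states ≤ -1, jump s' on states ≥ 0), every state x with x ≥ s or x < s' is never revisited by its orbit: for any i ≥ 1, x_i ≠ x. -/
/-- For the deterministic oscillating walk (jump `s > 0` from states `≤ -1`,
jump `s' < 0` from states `≥ 0`), every state `x` with `x ≥ s` or `x < s'` is
never revisited by its orbit: for any `i ≥ 1`, `x_i ≠ x`. -/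
theorem stmt_2 (s s' : ℤ) (hs : 0 < s) (hs' : s' < 0)
    (step : ℤ → ℤ) (hstep : ∀ x : ℤ, step x = if x ≤ -1 then x + s else x + s')
    (x : ℤ) (hx : s ≤ x ∨ x < s') :
    ∀ i : ℕ, 1 ≤ i → step^[i] x ≠ x := by
  have key : ∀ i : ℕ, 1 ≤ i → (s ≤ x → step^[i] x < x) ∧ (x < s' → x < step^[i] x) := by
    intro i hi
    induction i with
    | zero => omega
    | succ n ih =>
      rcases Nat.lt_or_ge n 1 with h | h
      · have hn : n = 0 := by omega
        subst hn
        rw [Function.iterate_succ_apply', Function.iterate_zero_apply, hstep]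
        constructor
        · intro hxs; split <;> omega
        · intro hxs; split <;> omega
      · obtain ⟨h1, h2⟩ := ih h
        rw [Function.iterate_succ_apply', hstep]
        constructor
        · intro hxs
          have := h1 hxs
          split <;> omega
        · intro hxs
          have := h2 hxs
          split <;> omega
  intro i hi hne
  obtain ⟨h1, h2⟩ := key i hi
  rcases hx with h | h
  · have := h1 h; omega
  · have := h2 h; omega
end

section
/- Let μ be a probability measure on the positive integers and μ' a probability measure on the negative integers. The discrete measure ν on ℤ defined by ν(m) = μ'(]-∞, m]) for m ≤ -1 and ν(m) = μ([m+1, ∞[) for m ≥ 0 is invariant for the oscillating random walk kernel P(x, y) = μ(y - x) for x ≤ -1 and P(x, y) = μ'(y - x) for x ≥ 0; that is, for every y ∈ ℤ, Σ_x ν(x) P(x, y) = ν(y). -/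
/-- Let `μ` be a probability measure on the positive integers and `μ'` one on the
negative integers.  The discrete measure `ν` on `ℤ` given by `ν(m) = μ'(]-∞,m])` for
`m ≤ -1` and `ν(m) = μ([m+1,∞[)` for `m ≥ 0` is invariant for the oscillating random
walk kernel `P(x,y) = μ(y-x)` for `x ≤ -1`, `P(x,y) = μ'(y-x)` for `x ≥ 0`. -/
theorem stmt_4 (μ μ' : ℤ → ENNReal)
    (hμmass : ∑' k : ℤ, μ k = 1) (hμ'mass : ∑' k : ℤ, μ' k = 1)
    (hμsupp : ∀ k : ℤ, k ≤ 0 → μ k = 0) (hμ'supp : ∀ k : ℤ, 0 ≤ k → μ' k = 0)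
    (ν : ℤ → ENNReal)
    (hν : ∀ m : ℤ, ν m = if m ≤ -1 then (∑' k : ℤ, if k ≤ m then μ' k else 0)
                          else (∑' k : ℤ, if m + 1 ≤ k then μ k else 0)) :
    ∀ y : ℤ, (∑' x : ℤ, ν x * (if x ≤ -1 then μ (y - x) else μ' (y - x))) = ν y := by
  intro y
  have key : ∀ x : ℤ, ν x * (if x ≤ -1 then μ (y - x) else μ' (y - x))
      = ∑' k : ℤ, ((if x ≤ -1 ∧ k ≤ x then μ' k * μ (y - x) else 0)
        + (if 0 ≤ x ∧ x + 1 ≤ k then μ k * μ' (y - x) else 0)) := by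
    intro x
    rw [hν x]
    by_cases hx : x ≤ -1
    · rw [if_pos hx, if_pos hx, ← ENNReal.tsum_mul_right]
      refine tsum_congr fun k => ?_
      have hx' : ¬ (0 ≤ x) := by omega
      rw [ite_mul, zero_mul]
      split_ifs <;> first | (exfalso; omega) | ring1
    · rw [if_neg hx, if_neg hx, ← ENNReal.tsum_mul_right]
      refine tsum_congr fun k => ?_
      rw [ite_mul, zero_mul]
      split_ifs <;> first | (exfalso; omega) | ring1
  -- equivalences for reparametrizing the double sums
  let e₁ : ℤ × ℤ ≃ ℤ × ℤ :=
    { toFun := fun q => (y - q.2, q.1)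
      invFun := fun p => (p.2, y - p.1)
      left_inv := fun q => by simp
      right_inv := fun p => by simp }
  let e₂ : ℤ × ℤ ≃ ℤ × ℤ :=
    { toFun := fun q => (y - q.1, q.2)
      invFun := fun p => (y - p.1, p.2)
      left_inv := fun q => by simp
      right_inv := fun p => by simp }
  have point : ∀ k m : ℤ,
      (if y - m ≤ -1 ∧ k ≤ y - m then μ' k * μ m else 0)
        + (if 0 ≤ y - k ∧ y - k + 1 ≤ m then μ m * μ' k else 0)
      = (if k ≤ y then μ' k else 0) * (if y + 1 ≤ m then μ m else 0) := by
    intro k m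
    by_cases hk : μ' k = 0
    · simp [hk]
    by_cases hm : μ m = 0
    · simp [hm]
    have hk1 : k ≤ -1 := by
      by_contra h; exact hk (hμ'supp k (by omega))
    have hm1 : 1 ≤ m := by
      by_contra h; exact hm (hμsupp m (by omega))
    split_ifs <;> first | (exfalso; omega) | ring1
  calc ∑' x : ℤ, ν x * (if x ≤ -1 then μ (y - x) else μ' (y - x))
      = ∑' x : ℤ, ∑' k : ℤ, ((if x ≤ -1 ∧ k ≤ x then μ' k * μ (y - x) else 0)
          + (if 0 ≤ x ∧ x + 1 ≤ k then μ k * μ' (y - x) else 0)) := tsum_congr key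
    _ = ∑' p : ℤ × ℤ, ((if p.1 ≤ -1 ∧ p.2 ≤ p.1 then μ' p.2 * μ (y - p.1) else 0)
          + (if 0 ≤ p.1 ∧ p.1 + 1 ≤ p.2 then μ p.2 * μ' (y - p.1) else 0)) :=
        (ENNReal.tsum_prod (f := fun x k =>
          (if x ≤ -1 ∧ k ≤ x then μ' k * μ (y - x) else 0)
          + (if 0 ≤ x ∧ x + 1 ≤ k then μ k * μ' (y - x) else 0))).symm
    _ = (∑' p : ℤ × ℤ, if p.1 ≤ -1 ∧ p.2 ≤ p.1 then μ' p.2 * μ (y - p.1) else 0)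
        + ∑' p : ℤ × ℤ, if 0 ≤ p.1 ∧ p.1 + 1 ≤ p.2 then μ p.2 * μ' (y - p.1) else 0 :=
        ENNReal.tsum_add
    _ = (∑' q : ℤ × ℤ, if y - q.2 ≤ -1 ∧ q.1 ≤ y - q.2 then μ' q.1 * μ (y - (y - q.2)) else 0)
        + ∑' q : ℤ × ℤ, if 0 ≤ y - q.1 ∧ y - q.1 + 1 ≤ q.2 then μ q.2 * μ' (y - (y - q.1)) else 0 := by
        congr 1
        · exact (Equiv.tsum_eq e₁ (fun p : ℤ × ℤ =>
            if p.1 ≤ -1 ∧ p.2 ≤ p.1 then μ' p.2 * μ (y - p.1) else 0)).symm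
        · exact (Equiv.tsum_eq e₂ (fun p : ℤ × ℤ =>
            if 0 ≤ p.1 ∧ p.1 + 1 ≤ p.2 then μ p.2 * μ' (y - p.1) else 0)).symm
    _ = ∑' q : ℤ × ℤ, ((if y - q.2 ≤ -1 ∧ q.1 ≤ y - q.2 then μ' q.1 * μ q.2 else 0)
          + (if 0 ≤ y - q.1 ∧ y - q.1 + 1 ≤ q.2 then μ q.2 * μ' q.1 else 0)) := by
        rw [← ENNReal.tsum_add]
        refine tsum_congr fun q => ?_
        have h1 : y - (y - q.2) = q.2 := by ring
        have h2 : y - (y - q.1) = q.1 := by ring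
        rw [h1, h2]
    _ = ∑' q : ℤ × ℤ, (if q.1 ≤ y then μ' q.1 else 0) * (if y + 1 ≤ q.2 then μ q.2 else 0) :=
        tsum_congr fun q => point q.1 q.2
    _ = ∑' k : ℤ, ∑' m : ℤ, (if k ≤ y then μ' k else 0) * (if y + 1 ≤ m then μ m else 0) :=
        ENNReal.tsum_prod (f := fun k m =>
          (if k ≤ y then μ' k else 0) * (if y + 1 ≤ m then μ m else 0))
    _ = (∑' k : ℤ, if k ≤ y then μ' k else 0) * (∑' m : ℤ, if y + 1 ≤ m then μ m else 0) := by
        simp_rw [ENNReal.tsum_mul_left]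
        rw [ENNReal.tsum_mul_right]
    _ = ν y := by
        rw [hν y]
        by_cases hy : y ≤ -1
        · rw [if_pos hy]
          have : (∑' m : ℤ, if y + 1 ≤ m then μ m else 0) = 1 := by
            rw [← hμmass]
            refine tsum_congr fun m => ?_
            by_cases h : y + 1 ≤ m
            · rw [if_pos h]
            · rw [if_neg h, hμsupp m (by omega)]
          rw [this, mul_one]
        · rw [if_neg hy]
          have : (∑' k : ℤ, if k ≤ y then μ' k else 0) = 1 := by
            rw [← hμ'mass]
            refine tsum_congr fun k => ?_
            by_cases h : k ≤ y
            · rw [if_pos h]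
            · rw [if_neg h, hμ'supp k (by omega)]
          rw [this, one_mul]
end

section
/- Let μ be supported on ℤ⁺ and μ' on ℤ⁻, with S_n = ξ_1 + ... + ξ_n the μ-random walk and U = Σ_{n≥0} μ^{*n} its potential kernel. For x < 0 and y ≥ 0, the probability that the oscillating walk started at x, moving by i.i.d. jumps with law μ while negative, first becomes nonnegative at the value y equals Σ_{t=0}^{-x-1} μ(y - x - t) U(t). -/
/-!
Positive jumps make the partial sums `S n` strictly increasing almost surely, so the value
`y - x` is taken by `S (n + 1)` for at most one `n` and the crossing events indexed by `n` are
a.e. disjoint. For fixed `n`, splitting on the value `t < -x` of `S n ≥ 0` and using the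
independence of `S n` and `ξ n` gives `∑ₜ P[S n = t] μ(y - x - t)`; summing over `n` produces `U`.
-/

open MeasureTheory Finset Function
open ProbabilityTheory (IndepFun)

lemma measure_lt_and_add_eq_of_indepFun {Ω : Type*} [MeasurableSpace Ω] {μ : Measure Ω}
    {X Y : Ω → ℤ} (hX : Measurable X) (hY : Measurable Y) (hXY : IndepFun X Y μ)
    (hX₀ : ∀ᵐ ω ∂μ, 0 ≤ X ω) (b c : ℤ) :
    μ {ω | X ω < b ∧ X ω + Y ω = c}
      = ∑ t ∈ range b.toNat, μ (X ⁻¹' {(t : ℤ)}) * μ (Y ⁻¹' {c - t}) := by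
  have hsplit : {ω | X ω < b ∧ X ω + Y ω = c}
      =ᵐ[μ] ⋃ t ∈ range b.toNat, X ⁻¹' {(t : ℤ)} ∩ Y ⁻¹' {c - t} := by
    refine Filter.eventuallyEq_set.2 ?_
    filter_upwards [hX₀] with ω hω
    simp only [Set.mem_iUnion, Set.mem_inter_iff, Set.mem_preimage, Set.mem_singleton_iff,
      mem_range, Int.lt_toNat, exists_prop]
    lift X ω to ℕ using hω with k
    constructor
    · rintro ⟨hlt, hsum⟩
      exact ⟨k, hlt, rfl, by omega⟩
    · rintro ⟨t, ht, hkt, hYt⟩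
      omega
  rw [measure_congr hsplit, measure_biUnion_finset]
  · exact sum_congr rfl fun t _ => hXY.measure_inter_preimage_eq_mul _ _
      (measurableSet_singleton _) (measurableSet_singleton _)
  · intro s _ t _ hst
    exact Disjoint.mono Set.inter_subset_left Set.inter_subset_left
      ((Set.disjoint_singleton.2 (by exact_mod_cast hst)).preimage X)
  · exact fun t _ => (hX (measurableSet_singleton _)).inter (hY (measurableSet_singleton _))

lemma measure_iUnion_of_ae_injective {Ω ι α : Type*} [MeasurableSpace Ω] {μ : Measure Ω}
    [Countable ι] {f : ι → Ω → α} (hf : ∀ᵐ ω ∂μ, Injective (f · ω)) (c : α) {s : ι → Set Ω}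
    (hs : ∀ i, s i ⊆ {ω | f i ω = c}) (hs_meas : ∀ i, NullMeasurableSet (s i) μ) :
    μ (⋃ i, s i) = ∑' i, μ (s i) := by
  refine measure_iUnion₀ (fun i j hij => measure_eq_zero_iff_ae_notMem.2 ?_) hs_meas
  filter_upwards [hf] with ω hω ⟨hi, hj⟩
  exact hij (hω ((hs i hi).trans (hs j hj).symm))

lemma strictMono_partialSum {a : ℕ → ℤ} (ha : ∀ i, 0 < a i) :
    StrictMono fun n => ∑ i ∈ range n, a i :=
  strictMono_nat_of_lt_succ fun n => by simpa [sum_range_succ] using ha n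

section RandomWalk

variable {Ω : Type*} [MeasurableSpace Ω] {P : Measure Ω} {ξ : ℕ → Ω → ℤ}

lemma ae_strictMono_partialSum (hpos : ∀ n, ∀ᵐ ω ∂P, 0 < ξ n ω) :
    ∀ᵐ ω ∂P, StrictMono fun n => ∑ i ∈ range n, ξ i ω := by
  filter_upwards [ae_all_iff.2 hpos] with ω hω
  exact strictMono_partialSum hω

lemma measure_partialSum_lt_and_partialSum_succ_eq (hmeas : ∀ n, Measurable (ξ n))
    (hindep : ProbabilityTheory.iIndepFun ξ P) (hpos : ∀ n, ∀ᵐ ω ∂P, 0 < ξ n ω) (n : ℕ) (b c : ℤ) :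
    P {ω | ∑ i ∈ range n, ξ i ω < b ∧ ∑ i ∈ range (n + 1), ξ i ω = c}
      = ∑ t ∈ range b.toNat, P {ω | ∑ i ∈ range n, ξ i ω = t} * P (ξ n ⁻¹' {c - t}) := by
  have hsum_nonneg : ∀ᵐ ω ∂P, 0 ≤ ∑ i ∈ range n, ξ i ω := by
    filter_upwards [ae_strictMono_partialSum hpos] with ω hω
    simpa using hω.monotone (Nat.zero_le n)
  have hind := hindep.indepFun_finsetSum_of_notMem hmeas (notMem_range_self (n := n))
  rw [Finset.sum_fn] at hind
  simp only [sum_range_succ]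
  exact measure_lt_and_add_eq_of_indepFun (Finset.measurable_sum _ fun i _ => hmeas i)
    (hmeas n) hind hsum_nonneg b c

lemma measure_exists_partialSum_lt_and_partialSum_succ_eq (hmeas : ∀ n, Measurable (ξ n))
    (hpos : ∀ n, ∀ᵐ ω ∂P, 0 < ξ n ω) (b c : ℤ) :
    P {ω | ∃ n, ∑ i ∈ range n, ξ i ω < b ∧ ∑ i ∈ range (n + 1), ξ i ω = c}
      = ∑' n, P {ω | ∑ i ∈ range n, ξ i ω < b ∧ ∑ i ∈ range (n + 1), ξ i ω = c} := by
  have hS_meas : ∀ n, Measurable fun ω => ∑ i ∈ range n, ξ i ω :=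
    fun n => Finset.measurable_sum _ fun i _ => hmeas i
  rw [Set.ofPred_exists]
  refine measure_iUnion_of_ae_injective (f := fun n ω => ∑ i ∈ range (n + 1), ξ i ω) ?_ c
    (fun n ω hω => hω.2) fun n => ?_
  · filter_upwards [ae_strictMono_partialSum hpos] with ω hω
    exact (hω.comp (strictMono_id.add_const 1)).injective
  · exact ((measurableSet_lt (hS_meas n) measurable_const).inter
      (hS_meas (n + 1) (measurableSet_singleton c))).nullMeasurableSet

end RandomWalk

theorem stmt_6_general {Ω : Type*} [MeasurableSpace Ω] (ℙ : Measure Ω)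
    (ξ : ℕ → Ω → ℤ) (hmeas : ∀ n, Measurable (ξ n))
    (hindep : ProbabilityTheory.iIndepFun ξ ℙ)
    (hident : ∀ n, Measure.map (ξ n) ℙ = Measure.map (ξ 0) ℙ)
    (hpos : ∀ n, ∀ᵐ ω ∂ℙ, 1 ≤ ξ n ω)
    (S : ℕ → Ω → ℤ) (hS : ∀ n ω, S n ω = ∑ i ∈ Finset.range n, ξ i ω)
    (μ : ℤ → ENNReal) (hμ : ∀ z : ℤ, μ z = ℙ {ω | ξ 0 ω = z})
    (U : ℕ → ENNReal) (hU : ∀ t : ℕ, U t = ∑' n : ℕ, ℙ {ω | S n ω = (t : ℤ)})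
    (x y : ℤ) :
    ℙ {ω | ∃ n : ℕ, x + S n ω ≤ -1 ∧ x + S (n + 1) ω = y}
      = ∑ t ∈ Finset.range (-x).toNat, μ (y - x - (t : ℤ)) * U t := by
  simp only [hS] at hU ⊢
  have hlaw : ∀ n z, ℙ (ξ n ⁻¹' {z}) = μ z := fun n z => by
    rw [hμ, ← Measure.map_apply (hmeas n) (measurableSet_singleton z), hident,
      Measure.map_apply (hmeas 0) (measurableSet_singleton z)]
    rfl
  have hevent : {ω | ∃ n : ℕ, x + ∑ i ∈ range n, ξ i ω ≤ -1 ∧ x + ∑ i ∈ range (n + 1), ξ i ω = y}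
      = {ω | ∃ n, ∑ i ∈ range n, ξ i ω < -x ∧ ∑ i ∈ range (n + 1), ξ i ω = y - x} := by
    ext ω
    exact exists_congr fun n => and_congr (by omega) (by omega)
  rw [hevent, measure_exists_partialSum_lt_and_partialSum_succ_eq hmeas hpos]
  simp_rw [measure_partialSum_lt_and_partialSum_succ_eq hmeas hindep hpos, hlaw]
  rw [Summable.tsum_finsetSum fun _ _ => ENNReal.summable]
  simp only [hU, ← ENNReal.tsum_mul_left, mul_comm]

/-- First-passage distribution for the oscillating walk with positive jumps of law `μ`
from negative states: started at `x < 0`, the probability that the walk first becomes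
nonnegative at the value `y ≥ 0` equals `∑_{t=0}^{-x-1} μ(y-x-t) U(t)`, where
`U(t) = ∑_{n≥0} P[S_n = t]` is the potential kernel of the random walk `S`. -/
theorem stmt_6 {Ω : Type*} [MeasurableSpace Ω] (ℙ : Measure Ω) [IsProbabilityMeasure ℙ]
    (ξ : ℕ → Ω → ℤ) (hmeas : ∀ n, Measurable (ξ n))
    (hindep : ProbabilityTheory.iIndepFun ξ ℙ)
    (hident : ∀ n, Measure.map (ξ n) ℙ = Measure.map (ξ 0) ℙ)
    (hpos : ∀ n, ∀ᵐ ω ∂ℙ, 1 ≤ ξ n ω)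
    (S : ℕ → Ω → ℤ) (hS : ∀ n ω, S n ω = ∑ i ∈ Finset.range n, ξ i ω)
    (μ : ℤ → ENNReal) (hμ : ∀ z : ℤ, μ z = ℙ {ω | ξ 0 ω = z})
    (U : ℕ → ENNReal) (hU : ∀ t : ℕ, U t = ∑' n : ℕ, ℙ {ω | S n ω = (t : ℤ)})
    (x y : ℤ) (hx : x < 0) (hy : 0 ≤ y) :
    ℙ {ω | ∃ n : ℕ, x + S n ω ≤ -1 ∧ x + S (n + 1) ω = y}
      = ∑ t ∈ Finset.range (-x).toNat, μ (y - x - (t : ℤ)) * U t :=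
  stmt_6_general ℙ ξ hmeas hindep hident hpos S hS μ hμ U hU x y
end

section
/- Let μ be supported on the positive integers and μ' on the negative integers, with tails H(n) = μ(]n, ∞[) and H'(-n) = μ'(]-∞, -n[). Define ρ(n) = Σ_{k≥1} μ'(-k) μ([n+1, n+k]) for n ≥ 0. Then Σ_{n≥0} ρ(n) = Σ_{n≥0} H(n) H'(-n). -/
/-!
With `a k = μ' (-k-1)` and `b j = μ (j+1)`, the block sum in `ρ n` is `∑_{i ≤ k} b (n+i)`, so summing
over `n` gives `∑_k a k ∑_{i ≤ k} H i`. Exchanging the order of summation over the pairs `i ≤ k`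
turns this into `∑_i H i ∑_{k ≥ i} a k = ∑_i H i * H' i`. In `[0, ∞]` every interchange is free.
-/

open Finset
open scoped ENNReal

lemma tsum_ite_lt_int_eq_tsum_nat (f : ℤ → ℝ≥0∞) (a : ℤ) :
    ∑' j : ℤ, (if a < j then f j else 0) = ∑' m : ℕ, f (m + a + 1) := by
  have hinj : Function.Injective fun m : ℕ => (m : ℤ) + a + 1 := fun m m' h => by
    simpa using h
  rw [← hinj.tsum_eq]
  · exact tsum_congr fun m => if_pos (by omega)
  · intro j hj
    have : a < j := by by_contra h; simp [h] at hj
    exact ⟨(j - a - 1).toNat, by simp only; omega⟩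

lemma tsum_ite_le_nat_eq_tsum_add (f : ℕ → ℝ≥0∞) (n : ℕ) :
    ∑' k : ℕ, (if n ≤ k then f k else 0) = ∑' m : ℕ, f (m + n) := by
  rw [← ENNReal.summable.sum_add_tsum_nat_add' (k := n),
    sum_eq_zero fun k hk => if_neg (not_le.mpr (mem_range.mp hk)), zero_add]
  simp

lemma sum_Icc_int_eq_sum_range {M : Type*} [AddCommMonoid M] (f : ℤ → M) (a : ℤ) (k : ℕ) :
    ∑ j ∈ Icc a (a + k), f j = ∑ i ∈ range (k + 1), f (i + a) := by
  rw [Int.Icc_eq_finset_map, sum_map, show (a + k + 1 - a).toNat = k + 1 by omega]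
  simp [add_comm]

lemma tsum_mul_sum_range_succ_eq_tsum_mul_tsum_add (a c : ℕ → ℝ≥0∞) :
    ∑' k, a k * ∑ i ∈ range (k + 1), c i = ∑' i, c i * ∑' m, a (m + i) := by
  calc ∑' k, a k * ∑ i ∈ range (k + 1), c i
      = ∑' k, ∑' i, if i ≤ k then c i * a k else 0 := by
        refine tsum_congr fun k => ?_
        rw [tsum_eq_sum (s := range (k + 1)) (fun i hi => if_neg (by simpa using hi)), mul_sum]
        exact sum_congr rfl fun i hi => by
          rw [if_pos (by simpa [Nat.lt_succ_iff] using hi), mul_comm]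
    _ = ∑' i, ∑' k, if i ≤ k then c i * a k else 0 := ENNReal.tsum_comm
    _ = ∑' i, c i * ∑' m, a (m + i) := by
        simp_rw [← tsum_ite_le_nat_eq_tsum_add, ← ENNReal.tsum_mul_left, mul_ite, mul_zero]

lemma tsum_tsum_mul_sum_range_eq_tsum_tail_mul_tail (a b : ℕ → ℝ≥0∞) :
    ∑' n, ∑' k, a k * ∑ i ∈ range (k + 1), b (i + n)
      = ∑' n, (∑' m, b (m + n)) * ∑' m, a (m + n) := by
  calc ∑' n, ∑' k, a k * ∑ i ∈ range (k + 1), b (i + n)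
      = ∑' k, a k * ∑ i ∈ range (k + 1), ∑' m, b (m + i) := by
        rw [ENNReal.tsum_comm]
        refine tsum_congr fun k => ?_
        rw [ENNReal.tsum_mul_left, ← Summable.tsum_finsetSum fun _ _ => ENNReal.summable]
        simp_rw [add_comm]
    _ = _ := tsum_mul_sum_range_succ_eq_tsum_mul_tsum_add a _

theorem stmt_7_general (μ μ' : ℤ → ENNReal)
    (H H' : ℕ → ENNReal)
    (hH : ∀ n : ℕ, H n = ∑' j : ℤ, if (n : ℤ) < j then μ j else 0)
    (hH' : ∀ n : ℕ, H' n = ∑' k : ℤ, if k < -(n : ℤ) then μ' k else 0)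
    (ρ : ℕ → ENNReal)
    (hρ : ∀ n : ℕ, ρ n = ∑' k : ℕ,
      μ' (-(k : ℤ) - 1) * ∑ j ∈ Finset.Icc ((n : ℤ) + 1) ((n : ℤ) + (k : ℤ) + 1), μ j) :
    ∑' n : ℕ, ρ n = ∑' n : ℕ, H n * H' n := by
  have hH_tail (n : ℕ) : H n = ∑' m : ℕ, μ ((m + n : ℕ) + 1) := by
    rw [hH, tsum_ite_lt_int_eq_tsum_nat]
    push_cast
    rfl
  have hH'_tail (n : ℕ) : H' n = ∑' m : ℕ, μ' (-((m + n : ℕ) : ℤ) - 1) := by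
    rw [hH', ← (Equiv.neg ℤ).tsum_eq]
    simp only [Equiv.neg_apply, neg_lt_neg_iff]
    rw [tsum_ite_lt_int_eq_tsum_nat]
    exact tsum_congr fun m => congr_arg μ' (by push_cast; ring)
  have hρ_range (n : ℕ) :
      ρ n = ∑' k : ℕ, μ' (-(k : ℤ) - 1) * ∑ i ∈ range (k + 1), μ ((i + n : ℕ) + 1) := by
    rw [hρ]
    refine tsum_congr fun k => ?_
    rw [add_right_comm (n : ℤ), sum_Icc_int_eq_sum_range]
    exact congr_arg _ (sum_congr rfl fun i _ => congr_arg μ (by push_cast; ring))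
  simp_rw [hρ_range, hH_tail, hH'_tail]
  exact tsum_tsum_mul_sum_range_eq_tsum_tail_mul_tail
    (fun k => μ' (-(k : ℤ) - 1)) (fun j => μ (j + 1))

/-- With `μ` supported on the positive integers and `μ'` on the negative integers,
tails `H(n) = μ(]n,∞[)`, `H'(-n) = μ'(]-∞,-n[)`, and
`ρ(n) = ∑_{k≥1} μ'(-k) μ([n+1,n+k])` for `n ≥ 0`, one has
`∑_{n≥0} ρ(n) = ∑_{n≥0} H(n) H'(-n)` in `[0,∞]`. -/
theorem stmt_7 (μ μ' : ℤ → ENNReal)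
    (hμmass : ∑' k : ℤ, μ k = 1) (hμ'mass : ∑' k : ℤ, μ' k = 1)
    (hμsupp : ∀ k : ℤ, k ≤ 0 → μ k = 0) (hμ'supp : ∀ k : ℤ, 0 ≤ k → μ' k = 0)
    (H H' : ℕ → ENNReal)
    (hH : ∀ n : ℕ, H n = ∑' j : ℤ, if (n : ℤ) < j then μ j else 0)
    (hH' : ∀ n : ℕ, H' n = ∑' k : ℤ, if k < -(n : ℤ) then μ' k else 0)
    (ρ : ℕ → ENNReal)
    (hρ : ∀ n : ℕ, ρ n = ∑' k : ℕ,
      μ' (-(k : ℤ) - 1) * ∑ j ∈ Finset.Icc ((n : ℤ) + 1) ((n : ℤ) + (k : ℤ) + 1), μ j) :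
    ∑' n : ℕ, ρ n = ∑' n : ℕ, H n * H' n :=
  stmt_7_general μ μ' H H' hH hH' ρ hρ
end

section
/- Let μ be supported on the positive integers and μ' on the negative integers, with tails H(n) = μ(]n, ∞[) and H'(-n) = μ'(]-∞, -n[). Define ρ(n) = Σ_{k≥1} μ(k) μ'([n-k+1, n]) for n ≤ -1. Then Σ_{n≤-1} ρ(n) = Σ_{n≥0} H(n) H'(-n). -/
lemma count_tsum (c : ENNReal) (s : Finset ℕ) :
    (∑' n : ℕ, if n ∈ s then c else 0) = s.card * c := by
  rw [tsum_eq_sum (s := s) (fun n hn => if_neg hn)]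
  rw [Finset.sum_congr rfl (fun n hn => if_pos hn), Finset.sum_const, nsmul_eq_mul]

/-- With `μ` supported on the positive integers and `μ'` on the negative integers,
tails `H(n) = μ(]n,∞[)`, `H'(-n) = μ'(]-∞,-n[)`, and
`ρ(n) = ∑_{k≥1} μ(k) μ'([n-k+1,n])` for `n ≤ -1`, one has
`∑_{n≤-1} ρ(n) = ∑_{n≥0} H(n) H'(-n)` in `[0,∞]`. -/
theorem stmt_8 (μ μ' : ℤ → ENNReal)
    (hμmass : ∑' k : ℤ, μ k = 1) (hμ'mass : ∑' k : ℤ, μ' k = 1)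
    (hμsupp : ∀ k : ℤ, k ≤ 0 → μ k = 0) (hμ'supp : ∀ k : ℤ, 0 ≤ k → μ' k = 0)
    (H H' : ℕ → ENNReal)
    (hH : ∀ n : ℕ, H n = ∑' j : ℤ, if (n : ℤ) < j then μ j else 0)
    (hH' : ∀ n : ℕ, H' n = ∑' k : ℤ, if k < -(n : ℤ) then μ' k else 0)
    (ρ : ℤ → ENNReal)
    (hρ : ∀ n : ℤ, n ≤ -1 → ρ n = ∑' k : ℕ,
      μ ((k : ℤ) + 1) * ∑ j ∈ Finset.Icc (n - (k : ℤ)) n, μ' j) :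
    ∑' m : ℕ, ρ (-(m : ℤ) - 1) = ∑' n : ℕ, H n * H' n := by
  -- reexpress H over ℕ
  have hH2 : ∀ n : ℕ, H n = ∑' k : ℕ, if n ≤ k then μ ((k : ℤ) + 1) else 0 := by
    intro n
    rw [hH n]
    have := Function.Injective.tsum_eq (f := fun j : ℤ => if (n : ℤ) < j then μ j else 0)
      (g := fun k : ℕ => (k : ℤ) + 1)
      (fun a b hab => by simp only at hab; omega)
      (by
        intro j hj
        simp only [Function.mem_support, ne_eq] at hj
        by_cases h : (n : ℤ) < j
        · rw [if_pos h] at hj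
          have hj1 : 1 ≤ j := by
            by_contra hc
            exact hj (hμsupp j (by omega))
          exact ⟨(j - 1).toNat, show ((j - 1).toNat : ℤ) + 1 = j by omega⟩
        · rw [if_neg h] at hj; exact absurd rfl hj)
    rw [← this]
    refine tsum_congr fun k => ?_
    show (if (n : ℤ) < (k : ℤ) + 1 then μ ((k : ℤ) + 1) else 0) = _
    exact if_congr (by omega) rfl rfl
  have hH'2 : ∀ n : ℕ, H' n = ∑' i : ℕ, if n ≤ i then μ' (-(i : ℤ) - 1) else 0 := by
    intro n
    rw [hH' n]
    have := Function.Injective.tsum_eq (f := fun j : ℤ => if j < -(n : ℤ) then μ' j else 0)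
      (g := fun i : ℕ => -(i : ℤ) - 1)
      (fun a b hab => by simp only at hab; omega)
      (by
        intro j hj
        simp only [Function.mem_support, ne_eq] at hj
        by_cases h : j < -(n : ℤ)
        · rw [if_pos h] at hj
          have hj1 : j ≤ -1 := by
            by_contra hc
            exact hj (hμ'supp j (by omega))
          exact ⟨(-j - 1).toNat, show -((-j - 1).toNat : ℤ) - 1 = j by omega⟩
        · rw [if_neg h] at hj; exact absurd rfl hj)
    rw [← this]
    refine tsum_congr fun i => ?_
    show (if -(i : ℤ) - 1 < -(n : ℤ) then μ' (-(i : ℤ) - 1) else 0) = _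
    exact if_congr (by omega) rfl rfl
  -- LHS equals common triple-sum expression
  have hL : ∑' m : ℕ, ρ (-(m : ℤ) - 1)
      = ∑' (k : ℕ) (i : ℕ), ((min k i + 1 : ℕ) : ENNReal) *
          (μ ((k : ℤ) + 1) * μ' (-(i : ℤ) - 1)) := by
    have step1 : ∀ m : ℕ, ρ (-(m : ℤ) - 1)
        = ∑' (k : ℕ) (i : ℕ),
            if m ≤ i ∧ i ≤ m + k then μ ((k : ℤ) + 1) * μ' (-(i : ℤ) - 1) else 0 := by
      intro m
      rw [hρ _ (by omega)]
      refine tsum_congr fun k => ?_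
      have himg : (Finset.Icc m (m + k)).image (fun i : ℕ => -(i : ℤ) - 1)
          = Finset.Icc (-(m : ℤ) - 1 - (k : ℤ)) (-(m : ℤ) - 1) := by
        ext j
        simp only [Finset.mem_image, Finset.mem_Icc]
        constructor
        · rintro ⟨i, hi, rfl⟩; omega
        · intro hj; exact ⟨(-j - 1).toNat, by omega, by omega⟩
      have hsum : ∑ j ∈ Finset.Icc (-(m : ℤ) - 1 - (k : ℤ)) (-(m : ℤ) - 1), μ' j
          = ∑ i ∈ Finset.Icc m (m + k), μ' (-(i : ℤ) - 1) := by
        rw [← himg, Finset.sum_image (fun a _ b _ hab => by omega)]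
      have hts : ∑ i ∈ Finset.Icc m (m + k), μ' (-(i : ℤ) - 1)
          = ∑' i : ℕ, if i ∈ Finset.Icc m (m + k) then μ' (-(i : ℤ) - 1) else 0 := by
        rw [tsum_eq_sum (s := Finset.Icc m (m + k)) (fun i hi => if_neg hi)]
        exact (Finset.sum_congr rfl (fun i hi => (if_pos hi).symm))
      rw [hsum, hts, ← ENNReal.tsum_mul_left]
      refine tsum_congr fun i => ?_
      simp only [Finset.mem_Icc, mul_ite, mul_zero]
    calc ∑' m : ℕ, ρ (-(m : ℤ) - 1)
        = ∑' (m : ℕ) (k : ℕ) (i : ℕ),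
            if m ≤ i ∧ i ≤ m + k then μ ((k : ℤ) + 1) * μ' (-(i : ℤ) - 1) else 0 :=
          tsum_congr step1
      _ = ∑' (k : ℕ) (m : ℕ) (i : ℕ),
            if m ≤ i ∧ i ≤ m + k then μ ((k : ℤ) + 1) * μ' (-(i : ℤ) - 1) else 0 :=
          ENNReal.tsum_comm
      _ = ∑' (k : ℕ) (i : ℕ) (m : ℕ),
            if m ≤ i ∧ i ≤ m + k then μ ((k : ℤ) + 1) * μ' (-(i : ℤ) - 1) else 0 :=
          tsum_congr fun k => ENNReal.tsum_comm
      _ = ∑' (k : ℕ) (i : ℕ), ((min k i + 1 : ℕ) : ENNReal) *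
            (μ ((k : ℤ) + 1) * μ' (-(i : ℤ) - 1)) := by
          refine tsum_congr fun k => tsum_congr fun i => ?_
          have : ∀ m : ℕ, (if m ≤ i ∧ i ≤ m + k then μ ((k : ℤ) + 1) * μ' (-(i : ℤ) - 1) else 0)
              = if m ∈ Finset.Icc (i - k) i then μ ((k : ℤ) + 1) * μ' (-(i : ℤ) - 1) else 0 := by
            intro m
            congr 1
            simp only [Finset.mem_Icc, eq_iff_iff]
            omega
          rw [tsum_congr this, count_tsum]
          congr 2
          rw [Nat.card_Icc]
          omega
  -- RHS equals common triple-sum expression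
  have hR : ∑' n : ℕ, H n * H' n
      = ∑' (k : ℕ) (i : ℕ), ((min k i + 1 : ℕ) : ENNReal) *
          (μ ((k : ℤ) + 1) * μ' (-(i : ℤ) - 1)) := by
    have step1 : ∀ n : ℕ, H n * H' n
        = ∑' (k : ℕ) (i : ℕ),
            if n ≤ k ∧ n ≤ i then μ ((k : ℤ) + 1) * μ' (-(i : ℤ) - 1) else 0 := by
      intro n
      rw [hH2 n, hH'2 n, ← ENNReal.tsum_mul_right]
      refine tsum_congr fun k => ?_
      rw [← ENNReal.tsum_mul_left]
      refine tsum_congr fun i => ?_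
      by_cases h1 : n ≤ k <;> by_cases h2 : n ≤ i <;>
        simp [h1, h2]
    calc ∑' n : ℕ, H n * H' n
        = ∑' (n : ℕ) (k : ℕ) (i : ℕ),
            if n ≤ k ∧ n ≤ i then μ ((k : ℤ) + 1) * μ' (-(i : ℤ) - 1) else 0 :=
          tsum_congr step1
      _ = ∑' (k : ℕ) (n : ℕ) (i : ℕ),
            if n ≤ k ∧ n ≤ i then μ ((k : ℤ) + 1) * μ' (-(i : ℤ) - 1) else 0 :=
          ENNReal.tsum_comm
      _ = ∑' (k : ℕ) (i : ℕ) (n : ℕ),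
            if n ≤ k ∧ n ≤ i then μ ((k : ℤ) + 1) * μ' (-(i : ℤ) - 1) else 0 :=
          tsum_congr fun k => ENNReal.tsum_comm
      _ = ∑' (k : ℕ) (i : ℕ), ((min k i + 1 : ℕ) : ENNReal) *
            (μ ((k : ℤ) + 1) * μ' (-(i : ℤ) - 1)) := by
          refine tsum_congr fun k => tsum_congr fun i => ?_
          have : ∀ n : ℕ, (if n ≤ k ∧ n ≤ i then μ ((k : ℤ) + 1) * μ' (-(i : ℤ) - 1) else 0)
              = if n ∈ Finset.Iic (min k i) then μ ((k : ℤ) + 1) * μ' (-(i : ℤ) - 1) else 0 := by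
            intro n
            congr 1
            simp only [Finset.mem_Iic, eq_iff_iff]
            omega
          rw [tsum_congr this, count_tsum]
          congr 2
          rw [Nat.card_Iic]
  rw [hL, hR]
end

section
/- Let X and Y be nonnegative random variables (on possibly different probability spaces) and p, q ∈ (0,1) with p + q = 1. If E[X^p] < ∞ and E[Y^q] < ∞, then Σ_{n=0}^∞ P[X > n] · P[Y > n] < ∞. -/
/-!
For `n ≥ 1`, Markov's inequality gives `P[Y > n] ≤ E[Y^q] n^(-q) = E[Y^q] n^(p-1)`, so it suffices
to bound `∑_{n ≥ 1} P[X > n] n^(p-1) = E[∑_{1 ≤ n < X} n^(p-1)]`. Concavity of `t ↦ t^p` gives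
`p n^(p-1) ≤ n^p - (n-1)^p`, so the inner sum telescopes to at most `X^p / p`.
-/

open MeasureTheory

namespace Real

theorem mul_rpow_sub_one_le_rpow_sub_rpow {p x : ℝ} (hp0 : 0 ≤ p) (hp1 : p ≤ 1) (hx : 1 ≤ x) :
    p * x ^ (p - 1) ≤ x ^ p - (x - 1) ^ p := by
  have hx0 : 0 < x := zero_lt_one.trans_le hx
  have hinv : x⁻¹ ≤ 1 := inv_le_one_of_one_le₀ hx
  have bernoulli : (1 + -x⁻¹) ^ p ≤ 1 + p * -x⁻¹ :=
    rpow_one_add_le_one_add_mul_self (by linarith) hp0 hp1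
  have hfactor : x - 1 = x * (1 + -x⁻¹) := by field_simp; ring
  calc p * x ^ (p - 1) = x ^ p - x ^ p * (1 + p * -x⁻¹) := by
        rw [rpow_sub_one hx0.ne']; ring
    _ ≤ x ^ p - x ^ p * (1 + -x⁻¹) ^ p := by gcongr
    _ = x ^ p - (x - 1) ^ p := by
        rw [hfactor, mul_rpow hx0.le (by linarith)]

theorem sum_range_rpow_sub_one_le {p : ℝ} (hp0 : 0 < p) (hp1 : p ≤ 1) (N : ℕ) :
    ∑ n ∈ Finset.range N, ((n : ℝ) + 1) ^ (p - 1) ≤ (N : ℝ) ^ p / p := by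
  have hterm : ∀ n : ℕ, ((n : ℝ) + 1) ^ (p - 1) ≤ (((n + 1 : ℕ) : ℝ) ^ p - (n : ℝ) ^ p) / p := by
    intro n
    rw [le_div_iff₀' hp0]
    simpa using mul_rpow_sub_one_le_rpow_sub_rpow hp0.le hp1
      (le_add_of_nonneg_left (Nat.cast_nonneg n) : (1 : ℝ) ≤ n + 1)
  calc ∑ n ∈ Finset.range N, ((n : ℝ) + 1) ^ (p - 1)
      ≤ ∑ n ∈ Finset.range N, (((n + 1 : ℕ) : ℝ) ^ p - (n : ℝ) ^ p) / p :=
        Finset.sum_le_sum fun n _ => hterm n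
    _ = (N : ℝ) ^ p / p := by
        rw [← Finset.sum_div, Finset.sum_range_sub (fun n : ℕ => (n : ℝ) ^ p)]
        simp [zero_rpow hp0.ne']

end Real

theorem tsum_ite_lt_rpow_sub_one_le {p x : ℝ} (hp0 : 0 < p) (hp1 : p ≤ 1) (hx : 0 ≤ x) :
    ∑' n : ℕ, (if (n : ℝ) + 1 < x then ENNReal.ofReal (((n : ℝ) + 1) ^ (p - 1)) else 0)
      ≤ ENNReal.ofReal (x ^ p / p) := by
  have hsupport : ∀ n ∉ Finset.range ⌊x⌋₊,
      (if (n : ℝ) + 1 < x then ENNReal.ofReal (((n : ℝ) + 1) ^ (p - 1)) else 0) = 0 := by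
    intro n hn
    have : (⌊x⌋₊ : ℝ) ≤ n := by simpa using hn
    rw [if_neg (by linarith [Nat.lt_floor_add_one x])]
  rw [tsum_eq_sum hsupport]
  calc ∑ n ∈ Finset.range ⌊x⌋₊,
        (if (n : ℝ) + 1 < x then ENNReal.ofReal (((n : ℝ) + 1) ^ (p - 1)) else 0)
      ≤ ∑ n ∈ Finset.range ⌊x⌋₊, ENNReal.ofReal (((n : ℝ) + 1) ^ (p - 1)) :=
        Finset.sum_le_sum fun n _ => by split_ifs <;> simp
    _ = ENNReal.ofReal (∑ n ∈ Finset.range ⌊x⌋₊, ((n : ℝ) + 1) ^ (p - 1)) :=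
        (ENNReal.ofReal_sum_of_nonneg fun n _ => by positivity).symm
    _ ≤ ENNReal.ofReal (x ^ p / p) := by
        gcongr
        refine (Real.sum_range_rpow_sub_one_le hp0 hp1 _).trans ?_
        gcongr
        exact Nat.floor_le hx

section

variable {Ω : Type*} [MeasurableSpace Ω] (μ : Measure Ω) {f : Ω → ℝ}

theorem measure_lt_le_lintegral_rpow_mul {q t : ℝ} (hf : Measurable f) (hq : 0 ≤ q) (ht : 0 < t) :
    μ {ω | t < f ω} ≤ (∫⁻ ω, ENNReal.ofReal (f ω ^ q) ∂μ) * ENNReal.ofReal (t ^ (-q)) := by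
  have htq : 0 < t ^ q := Real.rpow_pos_of_pos ht q
  calc μ {ω | t < f ω}
      ≤ μ {ω | ENNReal.ofReal (t ^ q) ≤ ENNReal.ofReal (f ω ^ q)} :=
        measure_mono fun ω hω => ENNReal.ofReal_le_ofReal
          (Real.rpow_le_rpow ht.le (le_of_lt hω) hq)
    _ ≤ (∫⁻ ω, ENNReal.ofReal (f ω ^ q) ∂μ) / ENNReal.ofReal (t ^ q) :=
        meas_ge_le_lintegral_div (hf.pow_const q).ennreal_ofReal.aemeasurable
          (ENNReal.ofReal_pos.2 htq).ne' ENNReal.ofReal_ne_top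
    _ = (∫⁻ ω, ENNReal.ofReal (f ω ^ q) ∂μ) * ENNReal.ofReal (t ^ (-q)) := by
        rw [div_eq_mul_inv, ← ENNReal.ofReal_inv_of_pos htq, Real.rpow_neg ht.le]

theorem tsum_measure_lt_mul_rpow_sub_one_le {p : ℝ} (hf : Measurable f) (hf0 : ∀ ω, 0 ≤ f ω)
    (hp0 : 0 < p) (hp1 : p ≤ 1) :
    ∑' n : ℕ, μ {ω | (n : ℝ) + 1 < f ω} * ENNReal.ofReal (((n : ℝ) + 1) ^ (p - 1))
      ≤ (∫⁻ ω, ENNReal.ofReal (f ω ^ p) ∂μ) * ENNReal.ofReal p⁻¹ := by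
  have hmeas : ∀ n : ℕ, MeasurableSet {ω | (n : ℝ) + 1 < f ω} :=
    fun n => measurableSet_lt measurable_const hf
  calc ∑' n : ℕ, μ {ω | (n : ℝ) + 1 < f ω} * ENNReal.ofReal (((n : ℝ) + 1) ^ (p - 1))
      = ∑' n : ℕ, ∫⁻ ω, {ω | (n : ℝ) + 1 < f ω}.indicator
          (fun _ => ENNReal.ofReal (((n : ℝ) + 1) ^ (p - 1))) ω ∂μ := by
        simp only [lintegral_indicator_const (hmeas _), mul_comm]
    _ = ∫⁻ ω, ∑' n : ℕ, {ω | (n : ℝ) + 1 < f ω}.indicator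
          (fun _ => ENNReal.ofReal (((n : ℝ) + 1) ^ (p - 1))) ω ∂μ :=
        (lintegral_tsum fun n => (measurable_const.indicator (hmeas n)).aemeasurable).symm
    _ ≤ ∫⁻ ω, ENNReal.ofReal (f ω ^ p / p) ∂μ :=
        lintegral_mono fun ω => by
          simpa [Set.indicator_apply] using tsum_ite_lt_rpow_sub_one_le hp0 hp1 (hf0 ω)
    _ = (∫⁻ ω, ENNReal.ofReal (f ω ^ p) ∂μ) * ENNReal.ofReal p⁻¹ := by
        simp_rw [div_eq_mul_inv, ENNReal.ofReal_mul (Real.rpow_nonneg (hf0 _) p)]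
        exact lintegral_mul_const _ (hf.pow_const p).ennreal_ofReal

end

theorem stmt_9_general {Ω Ω' : Type*} [MeasurableSpace Ω] [MeasurableSpace Ω']
    (ℙ : Measure Ω) [IsProbabilityMeasure ℙ] (ℙ' : Measure Ω') [IsProbabilityMeasure ℙ']
    (X : Ω → ℝ) (Y : Ω' → ℝ) (hX : Measurable X) (hY : Measurable Y)
    (hXpos : ∀ ω, 0 ≤ X ω)
    (p q : ℝ) (hp : 0 < p) (hq : 0 < q) (hpq : p + q = 1)
    (hXp : ∫⁻ ω, ENNReal.ofReal (X ω ^ p) ∂ℙ < ⊤)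
    (hYq : ∫⁻ ω, ENNReal.ofReal (Y ω ^ q) ∂ℙ' < ⊤) :
    ∑' n : ℕ, ℙ {ω | (n : ℝ) < X ω} * ℙ' {ω | (n : ℝ) < Y ω} < ⊤ := by
  set A := ∫⁻ ω, ENNReal.ofReal (X ω ^ p) ∂ℙ
  set B := ∫⁻ ω, ENNReal.ofReal (Y ω ^ q) ∂ℙ'
  have hneg_q : -q = p - 1 := by linarith
  have tail : ∑' n : ℕ, ℙ {ω | (n : ℝ) + 1 < X ω} * ℙ' {ω | (n : ℝ) + 1 < Y ω}
      ≤ B * (A * ENNReal.ofReal p⁻¹) :=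
    calc ∑' n : ℕ, ℙ {ω | (n : ℝ) + 1 < X ω} * ℙ' {ω | (n : ℝ) + 1 < Y ω}
        ≤ ∑' n : ℕ, ℙ {ω | (n : ℝ) + 1 < X ω} * (B * ENNReal.ofReal (((n : ℝ) + 1) ^ (p - 1))) :=
          ENNReal.tsum_le_tsum fun n => by
            gcongr
            rw [← hneg_q]
            exact measure_lt_le_lintegral_rpow_mul ℙ' hY hq.le (by positivity)
      _ = B * ∑' n : ℕ, ℙ {ω | (n : ℝ) + 1 < X ω} * ENNReal.ofReal (((n : ℝ) + 1) ^ (p - 1)) := by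
          simp only [← ENNReal.tsum_mul_left, mul_left_comm]
      _ ≤ B * (A * ENNReal.ofReal p⁻¹) := by
          gcongr
          exact tsum_measure_lt_mul_rpow_sub_one_le ℙ hX hXpos hp (by linarith)
  rw [tsum_eq_zero_add' ENNReal.summable]
  push_cast
  refine lt_of_le_of_lt (add_le_add (mul_le_one' prob_le_one prob_le_one) tail) ?_
  exact ENNReal.add_lt_top.2 ⟨ENNReal.one_lt_top,
    ENNReal.mul_lt_top hYq (ENNReal.mul_lt_top hXp ENNReal.ofReal_lt_top)⟩

/-- If `X, Y` are nonnegative random variables (on possibly different probability spaces),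
`p, q ∈ (0,1)` with `p + q = 1`, `E[X^p] < ∞` and `E[Y^q] < ∞`, then
`∑_{n≥0} P[X > n] P[Y > n] < ∞`. -/
theorem stmt_9 {Ω Ω' : Type*} [MeasurableSpace Ω] [MeasurableSpace Ω']
    (ℙ : Measure Ω) [IsProbabilityMeasure ℙ] (ℙ' : Measure Ω') [IsProbabilityMeasure ℙ']
    (X : Ω → ℝ) (Y : Ω' → ℝ) (hX : Measurable X) (hY : Measurable Y)
    (hXpos : ∀ ω, 0 ≤ X ω) (hYpos : ∀ ω, 0 ≤ Y ω)
    (p q : ℝ) (hp : 0 < p) (hp1 : p < 1) (hq : 0 < q) (hq1 : q < 1) (hpq : p + q = 1)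
    (hXp : ∫⁻ ω, ENNReal.ofReal (X ω ^ p) ∂ℙ < ⊤)
    (hYq : ∫⁻ ω, ENNReal.ofReal (Y ω ^ q) ∂ℙ' < ⊤) :
    ∑' n : ℕ, ℙ {ω | (n : ℝ) < X ω} * ℙ' {ω | (n : ℝ) < Y ω} < ⊤ :=
  stmt_9_general ℙ ℙ' X Y hX hY hXpos p q hp hq hpq hXp hYq
end

section
/- Let μ be supported on ℤ⁺, μ' on ℤ⁻. Define ν(n) = μ'(]-∞, n]) for n ≤ -1 and ν(n) = μ([n+1, ∞[) for n ≥ 0, and ρ(n) = Σ_{k≥0} A'(-k) ν(n+k) for n ≥ 0 where A'(-k) = δ_0(-k) − μ'(-k). Then for all n ≥ 0, ρ(n) = Σ_{k=1}^∞ μ'(-k) μ([n+1, n+k]). -/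
/-!
Write `S = ∑_{k ≥ 1} μ'(-k) ν(n+k)`. Since `μ'(0) = 0`, the left side is `ν(n) - S`. On the right,
`μ([n+1, n+k]) = ν(n) - ν(n+k)` is a difference of tails of `μ`, so the right side is
`ν(n) ∑_{k ≥ 1} μ'(-k) - S`, and `∑_{k ≥ 1} μ'(-k) = 1` because `μ'` is a probability on `ℤ⁻`.
All series converge since `ν(n+k) → 0` and `μ'` is summable.
-/

open Finset Filter Topology

theorem Summable.of_tsum_ne_zero {ι M : Type*} [AddCommMonoid M] [TopologicalSpace M]
    {f : ι → M} (h : ∑' i, f i ≠ 0) : Summable f :=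
  not_imp_comm.1 tsum_eq_zero_of_not_summable h

theorem Summable.tsum_int_tail_eq_sum_Icc_add {G : Type*} [AddCommGroup G] [UniformSpace G]
    [IsUniformAddGroup G] [CompleteSpace G] [T2Space G] {f : ℤ → G} (hf : Summable f)
    (m : ℤ) (k : ℕ) :
    ∑' j : ℕ, f (m + 1 + j) =
      ∑ j ∈ Icc (m + 1) (m + k + 1), f j + ∑' j : ℕ, f (m + k + 1 + 1 + j) := by
  have hg : Summable fun j : ℕ => f (m + 1 + j) :=
    hf.comp_injective (i := fun j : ℕ => m + 1 + j) fun a b hab => by simpa using hab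
  rw [← hg.sum_add_tsum_nat_add (k + 1), Int.Icc_eq_finset_map, sum_map,
    show (m + k + 1 + 1 - (m + 1)).toNat = k + 1 by omega]
  congr 1
  exact tsum_congr fun j => by push_cast; ring_nf

theorem tendsto_tsum_int_tail {G : Type*} [AddCommGroup G] [TopologicalSpace G]
    [IsTopologicalAddGroup G] [T2Space G] (f : ℤ → G) (m : ℤ) :
    Tendsto (fun k : ℕ => ∑' j : ℕ, f (m + k + 1 + j)) atTop (𝓝 0) := by
  have hg := tendsto_sum_nat_add fun j : ℕ => f (m + 1 + j)
  refine hg.congr fun k => tsum_congr fun j => ?_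
  push_cast; ring_nf

theorem hasSum_nat_neg_sub_one_of_nonneg_eq_zero {M : Type*} [AddCommMonoid M] [TopologicalSpace M]
    {f : ℤ → M} {s : M} (hf : HasSum f s) (hf₀ : ∀ k : ℤ, 0 ≤ k → f k = 0) :
    HasSum (fun k : ℕ => f (-(k : ℤ) - 1)) s := by
  have hinj : Function.Injective fun k : ℕ => -(k : ℤ) - 1 := fun a b hab => by simpa using hab
  refine (hinj.hasSum_iff fun x hx => hf₀ x ?_).2 hf
  by_contra! hneg
  exact hx ⟨(-x - 1).toNat, by simp only; omega⟩

theorem Summable.mul_of_tendsto {a b : ℕ → ℝ} {c : ℝ} (ha : Summable a)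
    (hb : Tendsto b atTop (𝓝 c)) : Summable fun k => a k * b k := by
  obtain ⟨C, hC⟩ := hb.norm.bddAbove_range
  refine Summable.of_norm_bounded (ha.norm.mul_right C) fun k => ?_
  rw [norm_mul]
  exact mul_le_mul_of_nonneg_left (hC ⟨k, rfl⟩) (norm_nonneg _)

/-- Both sides equal `w 0 - ∑' k, a (-k-1) * w (k+1)`. -/
theorem tsum_delta_sub_mul_eq_tsum_mul_sub {R : Type*} [Ring R] [TopologicalSpace R]
    [IsTopologicalRing R] [T2Space R] {a : ℤ → R} (w : ℕ → R) (ha₀ : a 0 = 0)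
    (ha : HasSum (fun k : ℕ => a (-(k : ℤ) - 1)) 1)
    (haw : Summable fun k : ℕ => a (-(k : ℤ) - 1) * w (k + 1)) :
    ∑' k : ℕ, ((if k = 0 then (1 : R) else 0) - a (-(k : ℤ))) * w k =
      ∑' k : ℕ, a (-(k : ℤ) - 1) * (w 0 - w (k + 1)) := by
  set S := ∑' k : ℕ, a (-(k : ℤ) - 1) * w (k + 1)
  have hlhs : HasSum (fun k : ℕ => ((if k = 0 then (1 : R) else 0) - a (-(k : ℤ))) * w k)
      (w 0 - S) := by
    have htail := HasSum.zero_add (m := -S)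
      (f := fun k : ℕ => ((if k = 0 then (1 : R) else 0) - a (-(k : ℤ))) * w k) <|
        haw.hasSum.neg.congr_fun fun k => by simp [neg_add_eq_sub]
    simpa [ha₀, sub_eq_add_neg] using htail
  have hrhs : HasSum (fun k : ℕ => a (-(k : ℤ) - 1) * (w 0 - w (k + 1))) (w 0 - S) := by
    simpa only [mul_sub, one_mul] using (ha.mul_right (w 0)).sub haw.hasSum
  rw [hlhs.tsum_eq, hrhs.tsum_eq]

theorem stmt_13_general (μ μ' : ℤ → ℝ)
    (hμmass : ∑' k : ℤ, μ k = 1) (hμ'mass : ∑' k : ℤ, μ' k = 1)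
    (hμ'supp : ∀ k : ℤ, 0 ≤ k → μ' k = 0)
    (ν : ℤ → ℝ) (hν : ∀ m : ℤ, 0 ≤ m → ν m = ∑' j : ℕ, μ (m + 1 + (j : ℤ))) :
    ∀ n : ℕ,
      (∑' k : ℕ, ((if k = 0 then (1 : ℝ) else 0) - μ' (-(k : ℤ))) * ν ((n : ℤ) + k))
        = ∑' k : ℕ, μ' (-(k : ℤ) - 1) *
            ∑ j ∈ Finset.Icc ((n : ℤ) + 1) ((n : ℤ) + (k : ℤ) + 1), μ j := by
  intro n
  have hμ : Summable μ := .of_tsum_ne_zero (by simp [hμmass])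
  have hμ' : Summable μ' := .of_tsum_ne_zero (by simp [hμ'mass])
  have ha := hasSum_nat_neg_sub_one_of_nonneg_eq_zero (hμ'mass ▸ hμ'.hasSum) hμ'supp
  have hν_tail : ∀ k : ℕ, ν ((n : ℤ) + (k + 1 : ℕ)) = ∑' j : ℕ, μ (n + k + 1 + 1 + j) := by
    intro k
    rw [hν _ (by positivity)]
    push_cast; ring_nf
  have hν_lim : Tendsto (fun k : ℕ => ν ((n : ℤ) + (k + 1 : ℕ))) atTop (𝓝 0) := by
    refine (tendsto_tsum_int_tail μ (n + 1)).congr fun k => ?_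
    rw [hν_tail]; ring_nf
  rw [tsum_delta_sub_mul_eq_tsum_mul_sub (fun k => ν (n + k)) (hμ'supp 0 le_rfl) ha
    (ha.summable.mul_of_tendsto hν_lim)]
  refine tsum_congr fun k => ?_
  rw [hν_tail, Nat.cast_zero, add_zero, hν _ (by positivity), hμ.tsum_int_tail_eq_sum_Icc_add n k]
  ring

/-- With `μ` supported on ℤ⁺ and `μ'` on ℤ⁻, `ν(n) = μ([n+1,∞[)` for `n ≥ 0`, and
`A'(-k) = δ₀(-k) - μ'(-k)`, one has, for all `n ≥ 0`,
`∑_{k≥0} A'(-k) ν(n+k) = ∑_{k≥1} μ'(-k) μ([n+1, n+k])`. -/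
theorem stmt_13 (μ μ' : ℤ → ℝ)
    (hμpos : ∀ k, 0 ≤ μ k) (hμ'pos : ∀ k, 0 ≤ μ' k)
    (hμmass : ∑' k : ℤ, μ k = 1) (hμ'mass : ∑' k : ℤ, μ' k = 1)
    (hμsupp : ∀ k : ℤ, k ≤ 0 → μ k = 0) (hμ'supp : ∀ k : ℤ, 0 ≤ k → μ' k = 0)
    (ν : ℤ → ℝ) (hν : ∀ m : ℤ, 0 ≤ m → ν m = ∑' j : ℕ, μ (m + 1 + (j : ℤ))) :
    ∀ n : ℕ,
      (∑' k : ℕ, ((if k = 0 then (1 : ℝ) else 0) - μ' (-(k : ℤ))) * ν ((n : ℤ) + k))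
        = ∑' k : ℕ, μ' (-(k : ℤ) - 1) *
            ∑ j ∈ Finset.Icc ((n : ℤ) + 1) ((n : ℤ) + (k : ℤ) + 1), μ j :=
  stmt_13_general μ μ' hμmass hμ'mass hμ'supp ν hν
end

section
/- Let μ be supported on ℤ⁺, μ' on ℤ⁻, U'(-k) = Σ_{n≥0} (μ')^{*n}(-k), and ρ(n) = Σ_{k≥1} μ'(-k) μ([n+1, n+k]) for n ≥ 0. Then for every n ≥ 0, Σ_{k=0}^∞ U'(-k) ρ(n+k) = μ([n+1, ∞[). -/
/-!
Write `τ(y) = μ([y+1, ∞[)` and let `P` be the averaging operator `P f (y) = ∑ₛ μ'(s) f(y - s)`.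
Splitting `τ(y) = μ([y+1, y-s]) + τ(y-s)` for each jump `s < 0` of `μ'` gives `τ = ρ + P τ`,
so `τ = ∑_{q<M} Pᵠ ρ + Pᴹ τ`, and `∑_q Pᵠ ρ` is `U' * ρ`. Since `μ'` jumps strictly down,
`Pᴹ τ (y) ≤ τ(y + M) → 0`. Working in `ℝ≥0∞` makes every interchange of sums free; the real
statement follows because all quantities involved are finite.
-/

open Filter Topology Finset
open scoped ENNReal

noncomputable def upperTail (m : ℤ → ℝ≥0∞) (y : ℤ) : ℝ≥0∞ :=
  ∑' j : ℕ, m (y + 1 + j)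

noncomputable def convPow (p : ℤ → ℝ≥0∞) : ℕ → ℤ → ℝ≥0∞
  | 0 => fun t => if t = 0 then 1 else 0
  | q + 1 => fun t => ∑' k, convPow p q k * p (t - k)

noncomputable def potential (p : ℤ → ℝ≥0∞) (t : ℤ) : ℝ≥0∞ :=
  ∑' q, convPow p q t

/-- The paper's `ρ`, with values in `ℝ≥0∞`. -/
noncomputable def crossingWeight (p m : ℤ → ℝ≥0∞) (y : ℤ) : ℝ≥0∞ :=
  ∑' k : ℕ, p (-(k : ℤ) - 1) * ∑ j ∈ Icc (y + 1) (y + k + 1), m j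

lemma tsum_int_eq_tsum_nat_sub {f : ℤ → ℝ≥0∞} (c : ℤ) (hf : ∀ t, c < t → f t = 0) :
    ∑' t, f t = ∑' k : ℕ, f (c - k) := by
  refine ((Function.Injective.tsum_eq (fun a b h => by simpa using h) ?_)).symm
  intro t ht
  have : t ≤ c := not_lt.1 fun h => ht (hf t h)
  exact ⟨(c - t).toNat, by simp only; omega⟩

section upperTail

variable (m : ℤ → ℝ≥0∞)

lemma upperTail_eq_sum_Icc_add (y : ℤ) (k : ℕ) :
    upperTail m y = ∑ j ∈ Icc (y + 1) (y + k), m j + upperTail m (y + k) := by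
  induction k with
  | zero => simp
  | succ k ih =>
    have hsplit : upperTail m (y + k) = m (y + k + 1) + upperTail m (y + k + 1) := by
      rw [upperTail, tsum_eq_zero_add' ENNReal.summable, upperTail]
      congr 1
      · push_cast; ring_nf
      · exact tsum_congr fun j => by push_cast; ring_nf
    rw [ih, hsplit, ← add_assoc, Nat.cast_succ, ← add_assoc,
      ← Finset.insert_Icc_right_eq_Icc_add_one (by omega), sum_insert (by simp), add_comm (m _)]

lemma antitone_upperTail : Antitone (upperTail m) := by
  intro y z hyz
  obtain ⟨k, rfl⟩ : ∃ k : ℕ, z = y + k := ⟨(z - y).toNat, by omega⟩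
  rw [upperTail_eq_sum_Icc_add m y k]
  exact le_add_self

lemma upperTail_le_tsum (y : ℤ) : upperTail m y ≤ ∑' t, m t :=
  ENNReal.tsum_comp_le_tsum_of_injective (fun a b h => by simpa using h) m

lemma tendsto_upperTail_add {y : ℤ} (hy : upperTail m y ≠ ∞) :
    Tendsto (fun M : ℕ => upperTail m (y + M)) atTop (𝓝 0) := by
  refine (ENNReal.tendsto_sum_nat_add _ hy).congr fun M => tsum_congr fun j => ?_
  push_cast; ring_nf

end upperTail

section convPow

variable (p : ℤ → ℝ≥0∞)

lemma tsum_convPow_zero_mul (f : ℤ → ℝ≥0∞) (x : ℤ) :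
    ∑' t, convPow p 0 t * f (x - t) = f x := by
  rw [tsum_eq_single 0 fun t ht => by simp [convPow, ht]]
  simp [convPow]

lemma tsum_convPow_succ_mul (q : ℕ) (f : ℤ → ℝ≥0∞) (x : ℤ) :
    ∑' t, convPow p (q + 1) t * f (x - t) = ∑' k, convPow p q k * ∑' s, p s * f (x - k - s) := by
  calc ∑' t, convPow p (q + 1) t * f (x - t)
      = ∑' k, ∑' t, convPow p q k * (p (t - k) * f (x - t)) := by
        simp only [convPow, ← ENNReal.tsum_mul_right, mul_assoc]
        exact ENNReal.tsum_comm
    _ = ∑' k, convPow p q k * ∑' s, p s * f (x - k - s) := by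
        refine tsum_congr fun k => ?_
        rw [ENNReal.tsum_mul_left, ← (Equiv.addRight k).tsum_eq]
        simp only [Equiv.coe_addRight, add_sub_cancel_right, sub_add_eq_sub_sub_swap]

lemma tsum_convPow_le_one (hp : ∑' s, p s ≤ 1) (q : ℕ) : ∑' t, convPow p q t ≤ 1 := by
  induction q with
  | zero => simpa using (tsum_convPow_zero_mul p (fun _ => 1) 0).le
  | succ q ih =>
    simpa using (tsum_convPow_succ_mul p q (fun _ => 1) 0).trans_le <|
      (ENNReal.tsum_le_tsum fun k => by simpa using mul_le_mul_right hp _).trans ih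

lemma convPow_ne_top (hp : ∑' s, p s ≤ 1) (q : ℕ) (t : ℤ) : convPow p q t ≠ ∞ :=
  ne_top_of_le_ne_top ENNReal.one_ne_top <|
    (ENNReal.le_tsum t).trans (tsum_convPow_le_one p hp q)

lemma convPow_eq_zero (hp : ∀ s, 0 ≤ s → p s = 0) {q : ℕ} {t : ℤ} (ht : -(q : ℤ) < t) :
    convPow p q t = 0 := by
  induction q generalizing t with
  | zero => exact if_neg (by omega)
  | succ q ih =>
    refine ENNReal.tsum_eq_zero.2 fun k => ?_
    rcases lt_or_ge (-(q : ℤ)) k with hk | hk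
    · rw [ih hk, zero_mul]
    · rw [hp _ (by push_cast at ht; omega), mul_zero]

lemma potential_eq_zero (hp : ∀ s, 0 ≤ s → p s = 0) {t : ℤ} (ht : 0 < t) : potential p t = 0 :=
  ENNReal.tsum_eq_zero.2 fun q => convPow_eq_zero p hp (by omega)

end convPow

section inversion

variable {p f g : ℤ → ℝ≥0∞} (hfg : ∀ y, f y = g y + ∑' s, p s * f (y - s))
include hfg

lemma tsum_convPow_mul_eq_add (q : ℕ) (x : ℤ) :
    ∑' t, convPow p q t * f (x - t) =
      ∑' t, convPow p q t * g (x - t) + ∑' t, convPow p (q + 1) t * f (x - t) := by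
  rw [tsum_convPow_succ_mul, ← ENNReal.tsum_add]
  exact tsum_congr fun t => by rw [hfg, mul_add]

lemma sum_range_add_tsum_convPow_mul (M : ℕ) (x : ℤ) :
    ∑ q ∈ range M, ∑' t, convPow p q t * g (x - t) + ∑' t, convPow p M t * f (x - t) = f x := by
  induction M with
  | zero => simpa using tsum_convPow_zero_mul p f x
  | succ M ih => rw [sum_range_succ, add_assoc, ← tsum_convPow_mul_eq_add hfg, ih]

theorem tsum_potential_mul_eq {x : ℤ}
    (hlim : Tendsto (fun M => ∑' t, convPow p M t * f (x - t)) atTop (𝓝 0)) :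
    ∑' t, potential p t * g (x - t) = f x := by
  have hsum : ∑' t, potential p t * g (x - t) = ∑' q, ∑' t, convPow p q t * g (x - t) := by
    simp only [potential, ← ENNReal.tsum_mul_right]
    exact ENNReal.tsum_comm
  have hconst : Tendsto (fun _ : ℕ => f x) atTop (𝓝 (∑' q, ∑' t, convPow p q t * g (x - t))) := by
    simpa using ((ENNReal.tendsto_nat_tsum _).add hlim).congr
      (sum_range_add_tsum_convPow_mul hfg · x)
  rw [hsum, tendsto_nhds_unique hconst tendsto_const_nhds]

end inversion

lemma tsum_convPow_mul_le {p f : ℤ → ℝ≥0∞} (hp : ∀ s, 0 ≤ s → p s = 0) (hp1 : ∑' s, p s ≤ 1)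
    (hf : Antitone f) (M : ℕ) (x : ℤ) :
    ∑' t, convPow p M t * f (x - t) ≤ f (x + M) :=
  calc ∑' t, convPow p M t * f (x - t) ≤ ∑' t, convPow p M t * f (x + M) := by
        refine ENNReal.tsum_le_tsum fun t => ?_
        rcases lt_or_ge (-(M : ℤ)) t with ht | ht
        · simp [convPow_eq_zero p hp ht]
        · exact mul_le_mul_right (hf (by omega)) _
    _ ≤ f (x + M) := by
        rw [ENNReal.tsum_mul_right]
        simpa using mul_le_mul_left (tsum_convPow_le_one p hp1 M) _

lemma upperTail_eq_crossingWeight_add {p : ℤ → ℝ≥0∞} (hp : ∀ s, 0 ≤ s → p s = 0)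
    (hp1 : ∑' s, p s = 1) (m : ℤ → ℝ≥0∞) (y : ℤ) :
    upperTail m y = crossingWeight p m y + ∑' s, p s * upperTail m (y - s) := by
  have hneg : ∀ F : ℤ → ℝ≥0∞, ∑' s, p s * F s = ∑' k : ℕ, p (-(k : ℤ) - 1) * F (-(k : ℤ) - 1) :=
    fun F => (tsum_int_eq_tsum_nat_sub (-1) fun t ht => by simp [hp t (by omega)]).trans <|
      tsum_congr fun k => by rw [neg_sub_comm]
  have hsplit : ∀ k : ℕ,
      upperTail m y = ∑ j ∈ Icc (y + 1) (y + k + 1), m j + upperTail m (y + k + 1) := by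
    intro k
    simpa only [Nat.cast_add_one, ← add_assoc] using upperTail_eq_sum_Icc_add m y (k + 1)
  calc upperTail m y = ∑' k : ℕ, p (-(k : ℤ) - 1) * upperTail m y := by
        have hnat : ∑' k : ℕ, p (-(k : ℤ) - 1) = 1 := by simpa [hp1] using (hneg fun _ => 1).symm
        rw [ENNReal.tsum_mul_right, hnat, one_mul]
    _ = crossingWeight p m y + ∑' k : ℕ, p (-(k : ℤ) - 1) * upperTail m (y + k + 1) := by
        rw [crossingWeight, ← ENNReal.tsum_add]
        exact tsum_congr fun k => by rw [← mul_add, ← hsplit]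
    _ = crossingWeight p m y + ∑' s, p s * upperTail m (y - s) := by
        rw [hneg]
        congr 2 with k
        ring_nf

theorem tsum_potential_mul_crossingWeight {p m : ℤ → ℝ≥0∞} (hp : ∀ s, 0 ≤ s → p s = 0)
    (hp1 : ∑' s, p s = 1) {y : ℤ} (hm : upperTail m y ≠ ∞) :
    ∑' k : ℕ, potential p (-(k : ℤ)) * crossingWeight p m (y + k) = upperTail m y := by
  have hlim : Tendsto (fun M => ∑' t, convPow p M t * upperTail m (y - t)) atTop (𝓝 0) :=
    tendsto_of_tendsto_of_tendsto_of_le_of_le tendsto_const_nhds (tendsto_upperTail_add m hm)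
      (fun _ => bot_le) (tsum_convPow_mul_le hp hp1.le (antitone_upperTail m) · y)
  rw [← tsum_potential_mul_eq (upperTail_eq_crossingWeight_add hp hp1 m) hlim,
    tsum_int_eq_tsum_nat_sub 0 fun t ht => by simp [potential_eq_zero p hp ht]]
  simp

lemma toReal_tsum_ofReal {ι : Type*} {f : ι → ℝ} (hf : ∀ i, 0 ≤ f i) :
    (∑' i, ENNReal.ofReal (f i)).toReal = ∑' i, f i := by
  rw [ENNReal.tsum_toReal_eq fun _ => ENNReal.ofReal_ne_top]
  exact tsum_congr fun i => ENNReal.toReal_ofReal (hf i)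

lemma tsum_ofReal_eq_one {ι : Type*} {f : ι → ℝ} (hf : ∀ i, 0 ≤ f i) (h : ∑' i, f i = 1) :
    ∑' i, ENNReal.ofReal (f i) = 1 := by
  have hsum : Summable f := by
    by_contra hs
    simp [tsum_eq_zero_of_not_summable hs] at h
  rw [← ENNReal.ofReal_tsum_of_nonneg hf hsum, h, ENNReal.ofReal_one]

lemma eq_toReal_convPow {a : ℤ → ℝ} (ha : ∀ k, 0 ≤ a k) (ha1 : ∑' k, ENNReal.ofReal (a k) ≤ 1)
    {b : ℕ → ℤ → ℝ} (hb0 : ∀ t, b 0 t = if t = 0 then 1 else 0)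
    (hbS : ∀ q t, b (q + 1) t = ∑' k, b q k * a (t - k)) (q : ℕ) (t : ℤ) :
    b q t = (convPow (fun k => ENNReal.ofReal (a k)) q t).toReal := by
  induction q generalizing t with
  | zero => rw [hb0]; split_ifs <;> simp [convPow, *]
  | succ q ih =>
    rw [hbS, convPow, ENNReal.tsum_toReal_eq fun k =>
      ENNReal.mul_ne_top (convPow_ne_top _ ha1 q k) ENNReal.ofReal_ne_top]
    exact tsum_congr fun k => by rw [ih, ENNReal.toReal_mul, ENNReal.toReal_ofReal (ha _)]

theorem stmt_14_general (μ μ' : ℤ → ℝ)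
    (hμpos : ∀ k, 0 ≤ μ k) (hμ'pos : ∀ k, 0 ≤ μ' k)
    (hμmass : ∑' k : ℤ, μ k = 1) (hμ'mass : ∑' k : ℤ, μ' k = 1)
    (hμ'supp : ∀ k : ℤ, 0 ≤ k → μ' k = 0)
    (μ'n : ℕ → ℤ → ℝ)
    (hμ'n0 : ∀ t : ℤ, μ'n 0 t = if t = 0 then 1 else 0)
    (hμ'nS : ∀ n : ℕ, ∀ t : ℤ, μ'n (n + 1) t = ∑' k : ℤ, μ'n n k * μ' (t - k))
    (U' : ℤ → ℝ) (hU' : ∀ t : ℤ, U' t = ∑' n : ℕ, μ'n n t)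
    (ρ : ℤ → ℝ)
    (hρ : ∀ n : ℤ, 0 ≤ n → ρ n = ∑' k : ℕ,
      μ' (-(k : ℤ) - 1) * ∑ j ∈ Finset.Icc (n + 1) (n + (k : ℤ) + 1), μ j) :
    ∀ n : ℕ,
      (∑' k : ℕ, U' (-(k : ℤ)) * ρ ((n : ℤ) + k)) = ∑' j : ℕ, μ ((n : ℤ) + 1 + j) := by
  intro n
  set m : ℤ → ℝ≥0∞ := fun k => ENNReal.ofReal (μ k)
  set m' : ℤ → ℝ≥0∞ := fun k => ENNReal.ofReal (μ' k)
  have hm'1 : ∑' s, m' s = 1 := tsum_ofReal_eq_one hμ'pos hμ'mass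
  have hm' : ∀ s, 0 ≤ s → m' s = 0 := fun s hs => by simp [m', hμ'supp s hs]
  have hU : ∀ t, U' t = (potential m' t).toReal := fun t => by
    rw [hU', potential, ENNReal.tsum_toReal_eq (convPow_ne_top _ hm'1.le · t)]
    exact tsum_congr fun q => eq_toReal_convPow hμ'pos hm'1.le hμ'n0 hμ'nS q t
  have hρ' : ∀ k : ℕ, ρ (n + k) = (crossingWeight m' m (n + k)).toReal := fun k => by
    rw [hρ _ (by positivity), crossingWeight,
      ← toReal_tsum_ofReal fun j => mul_nonneg (hμ'pos _) (sum_nonneg fun i _ => hμpos i)]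
    exact congrArg _ <| tsum_congr fun j => by
      rw [ENNReal.ofReal_mul (hμ'pos _), ENNReal.ofReal_sum_of_nonneg fun i _ => hμpos i]
  have htail : upperTail m n ≠ ∞ := ne_top_of_le_ne_top
    (by simp [m, tsum_ofReal_eq_one hμpos hμmass]) (upperTail_le_tsum m n)
  have hmain := tsum_potential_mul_crossingWeight hm' hm'1 htail
  calc ∑' k : ℕ, U' (-(k : ℤ)) * ρ ((n : ℤ) + k)
      = ∑' k : ℕ, (potential m' (-(k : ℤ)) * crossingWeight m' m (n + k)).toReal :=
        tsum_congr fun k => by rw [hU, hρ', ENNReal.toReal_mul]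
    _ = (upperTail m n).toReal := by
        rw [← ENNReal.tsum_toReal_eq, hmain]
        exact fun k => ne_top_of_le_ne_top htail (hmain ▸ ENNReal.le_tsum k)
    _ = ∑' j : ℕ, μ ((n : ℤ) + 1 + j) := toReal_tsum_ofReal fun j => hμpos _

/-- With `μ` supported on ℤ⁺, `μ'` on ℤ⁻, `U'(-k) = ∑_{n≥0} (μ')^{*n}(-k)` the potential
kernel of the `μ'`-walk, and `ρ(n) = ∑_{k≥1} μ'(-k) μ([n+1,n+k])` for `n ≥ 0`, one has,
for every `n ≥ 0`, `∑_{k≥0} U'(-k) ρ(n+k) = μ([n+1,∞[)`. -/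
theorem stmt_14 (μ μ' : ℤ → ℝ)
    (hμpos : ∀ k, 0 ≤ μ k) (hμ'pos : ∀ k, 0 ≤ μ' k)
    (hμmass : ∑' k : ℤ, μ k = 1) (hμ'mass : ∑' k : ℤ, μ' k = 1)
    (hμsupp : ∀ k : ℤ, k ≤ 0 → μ k = 0) (hμ'supp : ∀ k : ℤ, 0 ≤ k → μ' k = 0)
    (μ'n : ℕ → ℤ → ℝ)
    (hμ'n0 : ∀ t : ℤ, μ'n 0 t = if t = 0 then 1 else 0)
    (hμ'nS : ∀ n : ℕ, ∀ t : ℤ, μ'n (n + 1) t = ∑' k : ℤ, μ'n n k * μ' (t - k))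
    (U' : ℤ → ℝ) (hU' : ∀ t : ℤ, U' t = ∑' n : ℕ, μ'n n t)
    (ρ : ℤ → ℝ)
    (hρ : ∀ n : ℤ, 0 ≤ n → ρ n = ∑' k : ℕ,
      μ' (-(k : ℤ) - 1) * ∑ j ∈ Finset.Icc (n + 1) (n + (k : ℤ) + 1), μ j) :
    ∀ n : ℕ,
      (∑' k : ℕ, U' (-(k : ℤ)) * ρ ((n : ℤ) + k)) = ∑' j : ℕ, μ ((n : ℤ) + 1 + j) :=
  stmt_14_general μ μ' hμpos hμ'pos hμmass hμ'mass hμ'supp μ'n hμ'n0 hμ'nS U' hU' ρ hρ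
end

section
/- Let (a_i)_{i≥1} be a strictly increasing sequence of positive integers with supremum D = +∞ serving as the support of μ, and let μ' be supported on (-b_j)_{j≥1} with minimum D' = -b_n finite. Set a_0 = 0. Then every nonnegative integer y in the essential class is reachable as a crossing point (i.e., y − a_k lies in the negative part of the class for some k) if and only if sup_{k≥1} (a_k − a_{k-1}) ≤ -D'. -/
/-- Crossing criterion: with jump support `{a_1 < a_2 < …}` (`a_0 = 0`, unbounded above,
all `a_k` divisible by `δ`) and finite minimum `D' ≤ -1` of the negative jump support
(`δ ∣ D'`), every nonnegative `y` of residue `r` in the essential class is a crossing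
point — i.e. `y - a_k` lies in the negative part `{D', …, -1}` of the class for some
`k ≥ 1` — if and only if `sup_{k≥1} (a_k - a_{k-1}) ≤ -D'`. -/
theorem stmt_15 (δ : ℤ) (hδ : 0 < δ)
    (a : ℕ → ℤ) (ha0 : a 0 = 0) (hmono : StrictMono a) (hadvd : ∀ k, δ ∣ a k)
    (D' : ℤ) (hD' : D' ≤ -1) (hD'dvd : δ ∣ D')
    (r : ℤ) (hr0 : 0 ≤ r) (hrδ : r < δ) :
    (∀ y : ℤ, 0 ≤ y → δ ∣ y - r →
        ∃ k : ℕ, 1 ≤ k ∧ D' ≤ y - a k ∧ y - a k ≤ -1 ∧ δ ∣ (y - a k) - r)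
      ↔ (∀ k : ℕ, 1 ≤ k → a k - a (k - 1) ≤ -D') := by
  constructor
  · intro h k hk
    by_contra hgap
    push_neg at hgap
    have hδgap : δ ∣ a k - a (k - 1) := dvd_sub (hadvd k) (hadvd (k - 1))
    have hgap' : -D' + δ ≤ a k - a (k - 1) := by
      have hd : δ ∣ a k - a (k - 1) - -D' := dvd_sub hδgap (dvd_neg.mpr hD'dvd)
      have h1 : 0 < a k - a (k - 1) - -D' := by linarith
      have := Int.le_of_dvd h1 hd
      linarith
    have hak1 : 0 ≤ a (k - 1) := ha0 ▸ hmono.monotone (Nat.zero_le _)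
    obtain ⟨j, hj1, hj2, hj3, -⟩ := h (a (k - 1) + r) (by linarith)
      (by simpa using hadvd (k - 1))
    rcases le_or_gt j (k - 1) with hle | hlt
    · have : a j ≤ a (k - 1) := hmono.monotone hle
      linarith
    · have hkj : k ≤ j := by omega
      have : a k ≤ a j := hmono.monotone hkj
      linarith
  · intro h y hy hdvd
    have hlin : ∀ n : ℕ, (n : ℤ) ≤ a n := by
      intro n
      induction n with
      | zero => simp [ha0]
      | succ m ih =>
        have : a m < a (m + 1) := hmono (Nat.lt_succ_self m)
        push_cast
        linarith
    have hex : ∃ k, y < a k := by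
      refine ⟨(y + 1).toNat, ?_⟩
      have := hlin (y + 1).toNat
      rw [Int.toNat_of_nonneg (by linarith)] at this
      linarith
    classical
    set k := Nat.find hex with hkdef
    have hky : y < a k := Nat.find_spec hex
    have hk1 : 1 ≤ k := by
      rcases Nat.eq_zero_or_pos k with h0 | h1
      · exfalso
        rw [h0, ha0] at hky
        linarith
      · exact h1
    have hprev : ¬ y < a (k - 1) := Nat.find_min hex (by omega)
    push_neg at hprev
    have hgap := h k hk1
    refine ⟨k, hk1, by linarith, by linarith, ?_⟩
    have : (y - a k) - r = (y - r) - a k := by ring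
    rw [this]
    exact dvd_sub hdvd (hadvd k)
end

section
/- Let μ, μ' be probability measures on ℤ with gcd of the support of μ equal to d, gcd of the support of μ' equal to d', both supports intersecting ℤ⁺ and ℤ⁻, support of μ bounded above by D with D < d', and support of μ' generating the group d'ℤ. Then for the oscillating walk (jump law μ on negatives, μ' on nonnegatives), any state x ∈ {D, ..., d'−1} + d'ℤ≥0 is transient and its irreducible class is (x + d'ℤ) ∩ [D, ∞). -/
/-!
From a state `≥ 0` the walk jumps by elements of `Sμ' ⊆ d'ℤ`. As `Sμ'` has jumps of both signs,
the monoid it generates is the whole group `d'ℤ`, and taking the jumps of a decomposition in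
decreasing order keeps the walk inside `[0, ∞)`; so nonnegative states congruent mod `d'`
communicate. Conversely `{y ≥ D | y ≡ x [ZMOD d']}` is closed under predecessors: a negative state
jumps by at most `D`, so lands below `D`, and a nonnegative one keeps its residue, all of whose
nonnegative representatives are `≥ D` because `D ≤ x % d'`. Negative jumps of `Sμ'` take `x` to a
negative state, which therefore never returns.
-/

open Relation

theorem Int.neg_mem_addSubmonoid_of_pos_of_neg (M : AddSubmonoid ℤ) {a b n : ℤ}
    (ha : a ∈ M) (ha0 : 0 < a) (hb : b ∈ M) (hb0 : b < 0) (hn : n ∈ M) : -n ∈ M := by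
  rcases le_or_gt 0 n with hn0 | hn0
  · have h : n.toNat • b + (-b - 1).toNat • n = -n := by
      rw [nsmul_eq_mul, nsmul_eq_mul, Int.toNat_of_nonneg hn0, Int.toNat_of_nonneg (by omega)]
      ring
    exact h ▸ add_mem (nsmul_mem hb _) (nsmul_mem hn _)
  · have h : (-n).toNat • a + (a - 1).toNat • n = -n := by
      rw [nsmul_eq_mul, nsmul_eq_mul, Int.toNat_of_nonneg (by omega),
        Int.toNat_of_nonneg (by omega)]
      ring
    exact h ▸ add_mem (nsmul_mem ha _) (nsmul_mem hn _)

theorem Int.mem_addSubmonoidClosure_of_mem_addSubgroupClosure {S : Set ℤ} {a b t : ℤ}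
    (ha : a ∈ S) (ha0 : 0 < a) (hb : b ∈ S) (hb0 : b < 0) (ht : t ∈ AddSubgroup.closure S) :
    t ∈ AddSubmonoid.closure S := by
  have hle : AddSubmonoid.closure (S ∪ -S) ≤ AddSubmonoid.closure S := by
    refine AddSubmonoid.closure_le.2 (Set.union_subset AddSubmonoid.subset_closure ?_)
    intro s hs
    simpa using Int.neg_mem_addSubmonoid_of_pos_of_neg _ (AddSubmonoid.subset_closure ha) ha0
      (AddSubmonoid.subset_closure hb) hb0 (AddSubmonoid.subset_closure hs)
  rw [← AddSubgroup.closure_toAddSubmonoid] at hle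
  exact hle ht

theorem Int.le_of_nonneg_of_dvd_sub {c d y : ℤ} (hcd : c < d) (hy : 0 ≤ y) (h : d ∣ y - c) :
    c ≤ y := by
  obtain ⟨k, hk⟩ := h
  rcases le_or_gt 0 k with hk0 | hk0
  · rcases le_or_gt 0 d with hd0 | hd0 <;> nlinarith
  · rcases le_or_gt 0 d with hd0 | hd0 <;> nlinarith

section OscillatingWalk

variable {S S' : Set ℤ} {step : ℤ → ℤ → Prop}
  (hstep : ∀ x y, step x y ↔ (x ≤ -1 ∧ y - x ∈ S) ∨ (0 ≤ x ∧ y - x ∈ S'))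
include hstep

theorem step_add_of_nonneg {y s : ℤ} (hy : 0 ≤ y) (hs : s ∈ S') : step y (y + s) :=
  (hstep _ _).2 (Or.inr ⟨hy, by simpa using hs⟩)

theorem reflTransGen_add_sum {l : List ℤ} (hlS : ∀ s ∈ l, s ∈ S') (hl : l.Pairwise (· ≥ ·))
    {y : ℤ} (hy : 0 ≤ y) (hyl : 0 ≤ y + l.sum) : ReflTransGen step y (y + l.sum) := by
  induction l generalizing y with
  | nil => simpa using .refl
  | cons s l ih =>
    rw [List.pairwise_cons] at hl
    rw [List.sum_cons] at hyl ⊢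
    have hys : 0 ≤ y + s := by
      rcases le_or_gt 0 s with hs | hs
      · omega
      · have : l.sum ≤ l.length • 0 := l.sum_le_card_nsmul 0 fun t ht => by linarith [hl.1 t ht]
        simp only [smul_zero] at this
        omega
    rw [← add_assoc]
    exact .head (step_add_of_nonneg hstep hy (hlS s (by simp)))
      (ih (fun t ht => hlS t (by simp [ht])) hl.2 hys (by omega))

theorem reflTransGen_of_sub_mem_closure {u v : ℤ} (hu : 0 ≤ u) (hv : 0 ≤ v)
    (h : v - u ∈ AddSubmonoid.closure S') : ReflTransGen step u v := by
  obtain ⟨l, hlS, hl⟩ := AddSubmonoid.exists_list_of_mem_closure h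
  let l' := l.mergeSort fun s t => decide (t ≤ s)
  have hperm : l'.Perm l := List.mergeSort_perm _ _
  have hsorted : l'.Pairwise (· ≥ ·) := by
    simpa using List.pairwise_mergeSort (le := fun s t => decide (t ≤ s))
      (fun _ _ _ h₁ h₂ => by simp at h₁ h₂ ⊢; omega) (fun s t => by simp; omega) l
  have hsum : u + l'.sum = v := by rw [hperm.sum_eq, hl]; ring
  simpa [hsum] using reflTransGen_add_sum hstep (fun s hs => hlS s (hperm.subset hs)) hsorted hu
    (by omega)

theorem exists_neg_reflTransGen {b : ℤ} (hb : b ∈ S') (hb0 : b < 0) {y : ℤ} (hy : 0 ≤ y) :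
    ∃ z < 0, ReflTransGen step y z := by
  lift y to ℕ using hy
  induction y using Nat.strong_induction_on with
  | _ n ih =>
    have hstep_b := step_add_of_nonneg hstep (Int.natCast_nonneg n) hb
    rcases lt_or_ge ((n : ℤ) + b) 0 with hneg | hnonneg
    · exact ⟨_, hneg, .single hstep_b⟩
    · lift (n : ℤ) + b to ℕ using hnonneg with m hm
      obtain ⟨z, hz, hmz⟩ := ih m (by omega)
      exact ⟨z, hz, .head (hm ▸ hstep_b) hmz⟩

theorem mem_of_reflTransGen {D d' x : ℤ} (hSD : ∀ s ∈ S, s ≤ D) (hS' : ∀ s ∈ S', d' ∣ s)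
    (hx : ∀ y, 0 ≤ y → d' ∣ y - x → D ≤ y) {y z : ℤ} (hyz : ReflTransGen step y z)
    (hz : d' ∣ z - x ∧ D ≤ z) : d' ∣ y - x ∧ D ≤ y := by
  induction hyz using ReflTransGen.head_induction_on with
  | refl => exact hz
  | @head y w hyw _ ih =>
    obtain ⟨hw, hDw⟩ := ih
    rcases (hstep _ _).1 hyw with ⟨hy, hwy⟩ | ⟨hy, hwy⟩
    · linarith [hSD _ hwy]
    · have hdy : d' ∣ y - x := by simpa using dvd_sub hw (hS' _ hwy)
      exact ⟨hdy, hx y hy hdy⟩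

theorem setOf_reflTransGen_and_reflTransGen_eq {D d' x : ℤ} (hSD : ∀ s ∈ S, s ≤ D)
    (hS' : ∀ s ∈ S', d' ∣ s) (hS'gen : ∀ t, d' ∣ t → t ∈ AddSubmonoid.closure S')
    (hD0 : 0 ≤ D) (hx : ∀ y, 0 ≤ y → d' ∣ y - x → D ≤ y) (hxD : D ≤ x) :
    {y | ReflTransGen step x y ∧ ReflTransGen step y x} = {y | d' ∣ y - x ∧ D ≤ y} := by
  ext y
  constructor
  · rintro ⟨-, hyx⟩
    exact mem_of_reflTransGen hstep hSD hS' hx hyx ⟨by simp, hxD⟩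
  · rintro ⟨hdvd, hDy⟩
    exact ⟨reflTransGen_of_sub_mem_closure hstep (by omega) (by omega) (hS'gen _ hdvd),
      reflTransGen_of_sub_mem_closure hstep (by omega) (by omega)
        (hS'gen _ (dvd_sub_comm.1 hdvd))⟩

theorem exists_reflTransGen_not_reflTransGen {D d' x b : ℤ} (hSD : ∀ s ∈ S, s ≤ D)
    (hS' : ∀ s ∈ S', d' ∣ s) (hb : b ∈ S') (hb0 : b < 0) (hD0 : 0 ≤ D)
    (hx : ∀ y, 0 ≤ y → d' ∣ y - x → D ≤ y) (hxD : D ≤ x) :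
    ∃ y, ReflTransGen step x y ∧ ¬ ReflTransGen step y x := by
  obtain ⟨z, hz, hxz⟩ := exists_neg_reflTransGen hstep hb hb0 (hD0.trans hxD)
  refine ⟨z, hxz, fun hzx => ?_⟩
  have := (mem_of_reflTransGen hstep hSD hS' hx hzx ⟨by simp, hxD⟩).2
  omega

end OscillatingWalk

theorem stmt_16_general (Sμ Sμ' : Set ℤ)
    (hμpm : (Sμ ∩ {z | 0 < z}).Nonempty ∧ (Sμ ∩ {z | z < 0}).Nonempty)
    (hμ'pm : (Sμ' ∩ {z | 0 < z}).Nonempty ∧ (Sμ' ∩ {z | z < 0}).Nonempty)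
    (d' : ℤ)
    (hd'dvd : ∀ s ∈ Sμ', d' ∣ s)
    (hd'gen : AddSubgroup.closure Sμ' = AddSubgroup.closure {d'})
    (D : ℤ) (hD : IsGreatest Sμ D)
    (step : ℤ → ℤ → Prop)
    (hstep : ∀ x y : ℤ, step x y ↔ ((x ≤ -1 ∧ y - x ∈ Sμ) ∨ (0 ≤ x ∧ y - x ∈ Sμ'))) :
    ∀ x : ℤ, (∃ c m : ℤ, D ≤ c ∧ c ≤ d' - 1 ∧ 0 ≤ m ∧ x = c + d' * m) →
      (∃ y : ℤ, Relation.ReflTransGen step x y ∧ ¬ Relation.ReflTransGen step y x) ∧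
      {y : ℤ | Relation.ReflTransGen step x y ∧ Relation.ReflTransGen step y x}
        = {y : ℤ | d' ∣ y - x ∧ D ≤ y} := by
  obtain ⟨p, hpS, hp0⟩ := hμpm.1
  obtain ⟨a, haS, ha0⟩ := hμ'pm.1
  obtain ⟨b, hbS, hb0⟩ := hμ'pm.2
  have hD0 : 0 < D := lt_of_lt_of_le hp0 (hD.2 hpS)
  have hS'gen (t : ℤ) (ht : d' ∣ t) : t ∈ AddSubmonoid.closure Sμ' := by
    refine Int.mem_addSubmonoidClosure_of_mem_addSubgroupClosure haS ha0 hbS hb0 ?_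
    rwa [hd'gen, ← AddSubgroup.zmultiples_eq_closure, Int.mem_zmultiples_iff]
  rintro x ⟨c, m, hDc, hcd', hm, rfl⟩
  have hx (y : ℤ) (hy : 0 ≤ y) (h : d' ∣ y - (c + d' * m)) : D ≤ y := by
    refine hDc.trans (Int.le_of_nonneg_of_dvd_sub (d := d') (by omega) hy ?_)
    simpa [sub_add_eq_sub_sub] using dvd_add h (dvd_mul_right d' m)
  have hxD : D ≤ c + d' * m := hx _ (by nlinarith) (by simp)
  exact ⟨exists_reflTransGen_not_reflTransGen hstep hD.2 hd'dvd hbS hb0 hD0.le hx hxD,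
    setOf_reflTransGen_and_reflTransGen_eq hstep hD.2 hd'dvd hS'gen hD0.le hx hxD⟩

/-- General oscillating walk (jump support `Sμ` from states `≤ -1`, `Sμ'` from states
`≥ 0`), with both supports meeting ℤ⁺ and ℤ⁻, `d = gcd Sμ`, `d' = gcd Sμ'`, `Sμ`
bounded above by its maximum `D` with `D < d'`.  Then every
`x ∈ {D,…,d'-1} + d'ℤ₀⁺` is transient (not in an essential class) and its irreducible
class is `(x + d'ℤ) ∩ [D, ∞)`. -/
theorem stmt_16 (Sμ Sμ' : Set ℤ)
    (hμpm : (Sμ ∩ {z | 0 < z}).Nonempty ∧ (Sμ ∩ {z | z < 0}).Nonempty)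
    (hμ'pm : (Sμ' ∩ {z | 0 < z}).Nonempty ∧ (Sμ' ∩ {z | z < 0}).Nonempty)
    (d d' : ℤ) (hd : 0 < d) (hd' : 0 < d')
    (hddvd : ∀ s ∈ Sμ, d ∣ s) (hdgen : AddSubgroup.closure Sμ = AddSubgroup.closure {d})
    (hd'dvd : ∀ s ∈ Sμ', d' ∣ s)
    (hd'gen : AddSubgroup.closure Sμ' = AddSubgroup.closure {d'})
    (D : ℤ) (hD : IsGreatest Sμ D) (hDd' : D < d')
    (step : ℤ → ℤ → Prop)
    (hstep : ∀ x y : ℤ, step x y ↔ ((x ≤ -1 ∧ y - x ∈ Sμ) ∨ (0 ≤ x ∧ y - x ∈ Sμ'))) :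
    ∀ x : ℤ, (∃ c m : ℤ, D ≤ c ∧ c ≤ d' - 1 ∧ 0 ≤ m ∧ x = c + d' * m) →
      (∃ y : ℤ, Relation.ReflTransGen step x y ∧ ¬ Relation.ReflTransGen step y x) ∧
      {y : ℤ | Relation.ReflTransGen step x y ∧ Relation.ReflTransGen step y x}
        = {y : ℤ | d' ∣ y - x ∧ D ≤ y} :=
  stmt_16_general Sμ Sμ' hμpm hμ'pm d' hd'dvd hd'gen D hD step hstep
end
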